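/- arXiv:1801.10445 — 7 statements merged into one kernel-verified Lean document; each statement's English description precedes it below -/
import Mathlib

section
/- Let n+1 = 2m with m ≥ 2 and ω = exp(2πi/(n+1)). For ℓ ∈ {0,1,n} let R_ℓ be the set of ordered pairs (i,j) with 0 ≤ i,j ≤ n, i ≠ j, such that ω^j − ω^i = r·exp(−(ℓ+1)πi/(n+1)) for some real r > 0. If m = 2c then: R_0 = {(2c−1,0),(2c−2,1),…,(c,c−1)} ∪ {(2c,4c−1),(2c+1,4c−2),…,(3c−1,3c)}; R_1 = {(2c−1,4c−1),(2c,4c−2),…,(3c−2,3c)} ∪ {(2c−2,0),(2c−3,1),…,(c,c−2)}; R_n = {(4c−1,2c+1),(4c−2,2c+2),…,(3c+1,3c−1)} ∪ {(0,2c),(1,2c−1),…,(c−1,c+1)}. If m = 2c+1 then: R_0 = {(2c+1,4c+1),(2c+2,4c),…,(3c,3c+2)} ∪ {(2c,0),(2c−1,1),…,(c+1,c−1)}; R_1 = {(2c−1,0),(2c−2,1),…,(c,c−1)} ∪ {(2c,4c+1),(2c+1,4c),…,(3c,3c+1)}; R_n = {(0,2c+1),(1,2c),…,(c,c+1)} ∪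 {(4c+1,2c+2),(4c,2c+3),…,(3c+2,3c+1)}. -/
set_option maxHeartbeats 1000000 in
lemma stmt4_char (m L i j : ℕ) (hm : 1 ≤ m) (hL : L + 1 ≤ 2 * m) (hi : i + 1 ≤ 2 * m)
    (hj : j + 1 ≤ 2 * m) :
    (∃ r : ℝ, 0 < r ∧
        Complex.exp (2 * Real.pi * Complex.I / (2 * (m : ℂ))) ^ j
          - Complex.exp (2 * Real.pi * Complex.I / (2 * (m : ℂ))) ^ i
          = (r : ℂ) * Complex.exp (-(((L : ℂ) + 1) * Real.pi * Complex.I) / (2 * (m : ℂ)))) ↔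
    ((i + j + L + 1 = m ∨ i + j + L + 1 = 3 * m ∨ i + j + L + 1 = 5 * m) ∧
     (2 * j + L + 1 < m ∨ (3 * m < 2 * j + L + 1 ∧ 2 * j + L + 1 < 5 * m))) := by
  have hm0 : (0 : ℝ) < m := by exact_mod_cast hm
  obtain ⟨cR, hc, hπ⟩ : ∃ cR : ℝ, 0 < cR ∧ Real.pi = 2 * (m : ℝ) * cR :=
    ⟨Real.pi / (2 * m), by positivity, by field_simp⟩
  have hπC : (Real.pi : ℂ) = 2 * (m : ℂ) * (cR : ℂ) := by exact_mod_cast hπ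
  set x : ℝ := ((2 * j + L + 1 : ℕ) : ℝ) * cR with hxdef
  set y : ℝ := ((2 * i + L + 1 : ℕ) : ℝ) * cR with hydef
  set w : ℂ := (((L : ℂ) + 1) * Real.pi * Complex.I) / (2 * (m : ℂ)) with hwdef
  have key : ∀ t : ℕ, Complex.exp (2 * Real.pi * Complex.I / (2 * (m : ℂ))) ^ t *
      Complex.exp w = Complex.exp ((((2 * t + L + 1 : ℕ) : ℝ) * cR : ℝ) * Complex.I) := by
    intro t
    rw [← Complex.exp_nat_mul, ← Complex.exp_add, hwdef]
    congr 1
    have h2m : (2 * (m : ℂ)) ≠ 0 := by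
      simp only [ne_eq, mul_eq_zero]
      push_neg
      exact ⟨two_ne_zero, Nat.cast_ne_zero.mpr (by omega)⟩
    push_cast
    rw [hπC]
    field_simp
    have hmC : (m : ℂ) ≠ 0 := Nat.cast_ne_zero.mpr (by omega)
    calc _ = ((cR : ℂ) + (cR : ℂ) * (t : ℂ) * 2 + (cR : ℂ) * (L : ℂ)) * ((m : ℂ) * (m : ℂ)⁻¹) := by ring
      _ = _ := by rw [mul_inv_cancel₀ hmC, mul_one]; ring
  have hiff : ∀ (z : ℂ) (r : ℝ), (z = (r : ℂ) * Complex.exp (-w)) ↔ z * Complex.exp w = r := by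
    intro z r
    rw [Complex.exp_neg, eq_mul_inv_iff_mul_eq₀ (Complex.exp_ne_zero w)]
  have stepA : (∃ r : ℝ, 0 < r ∧
        Complex.exp (2 * Real.pi * Complex.I / (2 * (m : ℂ))) ^ j
          - Complex.exp (2 * Real.pi * Complex.I / (2 * (m : ℂ))) ^ i
          = (r : ℂ) * Complex.exp (-(((L : ℂ) + 1) * Real.pi * Complex.I) / (2 * (m : ℂ)))) ↔
      (Real.sin x = Real.sin y ∧ Real.cos y < Real.cos x) := by
    rw [show (-(((L : ℂ) + 1) * Real.pi * Complex.I)) / (2 * (m : ℂ)) = -w from neg_div _ _]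
    constructor
    · rintro ⟨r, hr, hz⟩
      rw [hiff, sub_mul, key j, key i] at hz
      have him := congrArg Complex.im hz
      have hre := congrArg Complex.re hz
      simp only [Complex.sub_im, Complex.exp_ofReal_mul_I_im, Complex.ofReal_im] at him
      simp only [Complex.sub_re, Complex.exp_ofReal_mul_I_re, Complex.ofReal_re] at hre
      exact ⟨by linarith, by linarith⟩
    · rintro ⟨hs, hcc⟩
      refine ⟨Real.cos x - Real.cos y, by linarith, ?_⟩
      rw [hiff, sub_mul, key j, key i]
      apply Complex.ext
      · simp only [Complex.sub_re, Complex.exp_ofReal_mul_I_re, Complex.ofReal_re]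
        rfl
      · simp only [Complex.sub_im, Complex.exp_ofReal_mul_I_im, Complex.ofReal_im]
        rw [hs, sub_self]
  rw [stepA]
  have hhalf : Real.pi / 2 = (m : ℝ) * cR := by rw [hπ]; ring
  constructor
  · rintro ⟨hs, hcc⟩
    have h0 := Real.sin_sub_sin x y
    rw [hs, sub_self] at h0
    rcases mul_eq_zero.mp h0.symm with h1 | h1
    · have h2 : Real.sin ((x - y) / 2) = 0 := by
        rcases mul_eq_zero.mp h1 with h | h
        · norm_num at h
        · exact h
      obtain ⟨kk, hkk⟩ := Real.sin_eq_zero_iff.mp h2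
      have hxy : x = y + (kk : ℝ) * (2 * Real.pi) := by linarith
      rw [hxy, Real.cos_add_int_mul_two_pi] at hcc
      exact absurd hcc (lt_irrefl _)
    · obtain ⟨k, hk⟩ := Real.cos_eq_zero_iff.mp h1
      have hsum : x + y = (2 * (k : ℝ) + 1) * Real.pi := by linarith
      have hcosy : Real.cos y = -Real.cos x := by
        have hy : y = (Real.pi - x) + (k : ℝ) * (2 * Real.pi) := by linarith
        rw [hy, Real.cos_add_int_mul_two_pi, Real.cos_pi_sub]
      have hcx : 0 < Real.cos x := by rw [hcosy] at hcc; linarith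
      rw [hxdef, hydef] at hsum
      have hsum2 : ((2 * j + L + 1 + (2 * i + L + 1) : ℕ) : ℝ) * cR
          = (((2 * k + 1) * (2 * m) : ℤ) : ℝ) * cR := by
        push_cast
        push_cast at hsum
        linear_combination hsum + (2 * (k : ℝ) + 1) * hπ
      have hZ : ((2 * j + L + 1 + (2 * i + L + 1) : ℕ) : ℤ) = (2 * k + 1) * (2 * m) := by
        have := mul_right_cancel₀ (ne_of_gt hc) hsum2
        exact_mod_cast this
      constructor
      · have hk0 : 0 ≤ k := by
          by_contra h
          push_neg at h
          have h2 : (2 * k + 1 : ℤ) ≤ -1 := by omega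
          have h3 : (2 * k + 1) * (2 * (m : ℤ)) ≤ (-1) * (2 * (m : ℤ)) :=
            mul_le_mul_of_nonneg_right h2 (by positivity)
          have h4 : (0 : ℤ) ≤ ((2 * j + L + 1 + (2 * i + L + 1) : ℕ) : ℤ) := by positivity
          have h5 : (1 : ℤ) ≤ (m : ℤ) := by exact_mod_cast hm
          linarith [hZ]
        have hk2 : k ≤ 2 := by
          by_contra h
          push_neg at h
          have h2 : (7 : ℤ) ≤ 2 * k + 1 := by omega
          have h3 : 7 * (2 * (m : ℤ)) ≤ (2 * k + 1) * (2 * (m : ℤ)) :=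
            mul_le_mul_of_nonneg_right h2 (by positivity)
          have h4 : ((2 * j + L + 1 + (2 * i + L + 1) : ℕ) : ℤ) ≤ 12 * (m : ℤ) - 2 := by
            push_cast; omega
          linarith [hZ]
        interval_cases k <;> omega
      · by_contra hq
        push_neg at hq
        obtain ⟨hq1, hq2⟩ := hq
        have haN : m ≤ 2 * j + L + 1 := by omega
        have hup : 2 * j + L + 1 ≤ 7 * m := by omega
        have hc1 : ((m : ℕ) : ℝ) ≤ ((2 * j + L + 1 : ℕ) : ℝ) := by exact_mod_cast haN
        rcases le_or_gt (2 * j + L + 1) (3 * m) with h | h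
        · have hc2 : ((2 * j + L + 1 : ℕ) : ℝ) ≤ 3 * (m : ℝ) := by exact_mod_cast h
          have hb1 : Real.pi / 2 ≤ x := by
            rw [hhalf, hxdef]; nlinarith
          have hb2 : x ≤ Real.pi + Real.pi / 2 := by
            rw [hhalf, hπ, hxdef]; nlinarith
          linarith [Real.cos_nonpos_of_pi_div_two_le_of_le hb1 hb2]
        · have h5 : 5 * m ≤ 2 * j + L + 1 := hq2 h
          have hc2 : 5 * (m : ℝ) ≤ ((2 * j + L + 1 : ℕ) : ℝ) := by exact_mod_cast h5
          have hc3 : ((2 * j + L + 1 : ℕ) : ℝ) ≤ 7 * (m : ℝ) := by exact_mod_cast hup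
          have hb1 : Real.pi / 2 ≤ x - 2 * Real.pi := by
            rw [hhalf, hπ, hxdef]; nlinarith
          have hb2 : x - 2 * Real.pi ≤ Real.pi + Real.pi / 2 := by
            rw [hhalf, hπ, hxdef]; nlinarith
          have := Real.cos_nonpos_of_pi_div_two_le_of_le hb1 hb2
          rw [Real.cos_sub_two_pi] at this
          linarith
  · rintro ⟨hK, hQ⟩
    obtain ⟨k, hk0, hZ⟩ : ∃ k : ℤ, 0 ≤ k ∧
        ((2 * j + L + 1 + (2 * i + L + 1) : ℕ) : ℤ) = (2 * k + 1) * (2 * m) := by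
      rcases hK with h | h | h
      · exact ⟨0, le_refl _, by push_cast; omega⟩
      · exact ⟨1, by norm_num, by push_cast; omega⟩
      · exact ⟨2, by norm_num, by push_cast; omega⟩
    have hZR : ((2 * j + L + 1 + (2 * i + L + 1) : ℕ) : ℝ) = (2 * (k : ℝ) + 1) * (2 * m) := by
      exact_mod_cast hZ
    have hsum : x + y = (2 * (k : ℝ) + 1) * Real.pi := by
      rw [hxdef, hydef]
      push_cast
      push_cast at hZR
      linear_combination cR * hZR - (2 * (k : ℝ) + 1) * hπ
    have hy : y = (Real.pi - x) + (k : ℝ) * (2 * Real.pi) := by linarith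
    have hcosy : Real.cos y = -Real.cos x := by
      rw [hy, Real.cos_add_int_mul_two_pi, Real.cos_pi_sub]
    have hsiny : Real.sin y = Real.sin x := by
      rw [hy, Real.sin_add_int_mul_two_pi, Real.sin_pi_sub]
    have hcx : 0 < Real.cos x := by
      rcases hQ with h | ⟨h1, h2⟩
      · apply Real.cos_pos_of_mem_Ioo
        have hc2 : ((2 * j + L + 1 : ℕ) : ℝ) < (m : ℝ) := by exact_mod_cast h
        have hc1 : (0 : ℝ) ≤ ((2 * j + L + 1 : ℕ) : ℝ) := by positivity
        constructor
        · rw [hhalf, hxdef]; nlinarith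
        · rw [hhalf, hxdef]; nlinarith
      · have hc1 : 3 * (m : ℝ) < ((2 * j + L + 1 : ℕ) : ℝ) := by exact_mod_cast h1
        have hc2 : ((2 * j + L + 1 : ℕ) : ℝ) < 5 * (m : ℝ) := by exact_mod_cast h2
        have hmem : x - 2 * Real.pi ∈ Set.Ioo (-(Real.pi / 2)) (Real.pi / 2) := by
          constructor
          · rw [hhalf, hπ, hxdef]; nlinarith
          · rw [hhalf, hπ, hxdef]; nlinarith
        have := Real.cos_pos_of_mem_Ioo hmem
        rwa [Real.cos_sub_two_pi] at this
    exact ⟨hsiny.symm, by rw [hcosy]; linarith⟩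

open Matrix

/-- explicit description of the roots supported on the singular directions
`θ_ℓ = -(ℓ+1)π/(n+1)`, `ℓ ∈ {0, 1, n}`, in the case `n + 1 = 2m`. -/
theorem stmt_4 (n m c : ℕ) (hm : 2 ≤ m) (hnm : n + 1 = 2 * m)
    (ω : ℂ) (hω : ω = Complex.exp (2 * Real.pi * Complex.I / (n + 1)))
    (R : ℕ → Set (ℕ × ℕ))
    (hR : ∀ ℓ, R ℓ = {p | p.1 ≤ n ∧ p.2 ≤ n ∧ p.1 ≠ p.2 ∧
      ∃ r : ℝ, 0 < r ∧ ω ^ p.2 - ω ^ p.1 =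
        (r : ℂ) * Complex.exp (-(((ℓ : ℂ) + 1) * Real.pi * Complex.I) / (n + 1))}) :
    (m = 2 * c →
      (R 0 = {p | ∃ t < c, p = (2*c - 1 - t, t)} ∪ {p | ∃ t < c, p = (2*c + t, 4*c - 1 - t)} ∧
       R 1 = {p | ∃ t < c, p = (2*c - 1 + t, 4*c - 1 - t)} ∪ {p | ∃ t < c - 1, p = (2*c - 2 - t, t)} ∧
       R n = {p | ∃ t < c - 1, p = (4*c - 1 - t, 2*c + 1 + t)} ∪ {p | ∃ t < c, p = (t, 2*c - t)})) ∧
    (m = 2 * c + 1 →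
      (R 0 = {p | ∃ t < c, p = (2*c + 1 + t, 4*c + 1 - t)} ∪ {p | ∃ t < c, p = (2*c - t, t)} ∧
       R 1 = {p | ∃ t < c, p = (2*c - 1 - t, t)} ∪ {p | ∃ t < c + 1, p = (2*c + t, 4*c + 1 - t)} ∧
       R n = {p | ∃ t < c + 1, p = (t, 2*c + 1 - t)} ∪ {p | ∃ t < c, p = (4*c + 1 - t, 2*c + 2 + t)})) := by
  have hm1 : 1 ≤ m := by omega
  have hnC : ((n : ℂ) + 1) = 2 * (m : ℂ) := by
    have h : ((n + 1 : ℕ) : ℂ) = ((2 * m : ℕ) : ℂ) := by rw [hnm]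
    push_cast at h
    exact h
  subst hω
  have hRL : ∀ L : ℕ, L + 1 ≤ 2 * m → R L = {p : ℕ × ℕ |
      p.1 + 1 ≤ 2 * m ∧ p.2 + 1 ≤ 2 * m ∧
      ((p.1 + p.2 + L + 1 = m ∨ p.1 + p.2 + L + 1 = 3 * m ∨ p.1 + p.2 + L + 1 = 5 * m) ∧
       (2 * p.2 + L + 1 < m ∨ (3 * m < 2 * p.2 + L + 1 ∧ 2 * p.2 + L + 1 < 5 * m)))} := by
    intro L hLb
    rw [hR]
    ext ⟨i, j⟩
    simp only [Set.mem_setOf_eq]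
    rw [hnC]
    constructor
    · rintro ⟨hi, hj, -, hr⟩
      have hi' : i + 1 ≤ 2 * m := by omega
      have hj' : j + 1 ≤ 2 * m := by omega
      exact ⟨hi', hj', (stmt4_char m L i j hm1 hLb hi' hj').mp hr⟩
    · rintro ⟨hi, hj, hcomb⟩
      exact ⟨by omega, by omega, by omega, (stmt4_char m L i j hm1 hLb hi hj).mpr hcomb⟩
  constructor
  · intro hc2
    refine ⟨?_, ?_, ?_⟩
    · rw [hRL 0 (by omega)]
      ext ⟨i, j⟩
      simp only [Set.mem_setOf_eq, Set.mem_union, Prod.mk.injEq]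
      constructor
      · rintro ⟨hi, hj, hK, hQ⟩
        by_cases h : j < c
        · exact Or.inl ⟨j, by omega, by omega, by omega⟩
        · exact Or.inr ⟨4*c - 1 - j, by omega, by omega, by omega⟩
      · rintro (⟨t, ht, h1, h2⟩ | ⟨t, ht, h1, h2⟩) <;>
          exact ⟨by omega, by omega, by omega, by omega⟩
    · rw [hRL 1 (by omega)]
      ext ⟨i, j⟩
      simp only [Set.mem_setOf_eq, Set.mem_union, Prod.mk.injEq]
      constructor
      · rintro ⟨hi, hj, hK, hQ⟩
        by_cases h : j + 2 ≤ c
        · exact Or.inr ⟨j, by omega, by omega, by omega⟩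
        · exact Or.inl ⟨4*c - 1 - j, by omega, by omega, by omega⟩
      · rintro (⟨t, ht, h1, h2⟩ | ⟨t, ht, h1, h2⟩) <;>
          exact ⟨by omega, by omega, by omega, by omega⟩
    · rw [hRL n (by omega)]
      ext ⟨i, j⟩
      simp only [Set.mem_setOf_eq, Set.mem_union, Prod.mk.injEq]
      constructor
      · rintro ⟨hi, hj, hK, hQ⟩
        by_cases h : j ≤ 2*c
        · exact Or.inr ⟨i, by omega, by omega, by omega⟩
        · exact Or.inl ⟨j - (2*c + 1), by omega, by omega, by omega⟩
      · rintro (⟨t, ht, h1, h2⟩ | ⟨t, ht, h1, h2⟩) <;>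
          exact ⟨by omega, by omega, by omega, by omega⟩
  · intro hc2
    refine ⟨?_, ?_, ?_⟩
    · rw [hRL 0 (by omega)]
      ext ⟨i, j⟩
      simp only [Set.mem_setOf_eq, Set.mem_union, Prod.mk.injEq]
      constructor
      · rintro ⟨hi, hj, hK, hQ⟩
        by_cases h : j < c
        · exact Or.inr ⟨j, by omega, by omega, by omega⟩
        · exact Or.inl ⟨4*c + 1 - j, by omega, by omega, by omega⟩
      · rintro (⟨t, ht, h1, h2⟩ | ⟨t, ht, h1, h2⟩) <;>
          exact ⟨by omega, by omega, by omega, by omega⟩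
    · rw [hRL 1 (by omega)]
      ext ⟨i, j⟩
      simp only [Set.mem_setOf_eq, Set.mem_union, Prod.mk.injEq]
      constructor
      · rintro ⟨hi, hj, hK, hQ⟩
        by_cases h : j < c
        · exact Or.inl ⟨j, by omega, by omega, by omega⟩
        · exact Or.inr ⟨4*c + 1 - j, by omega, by omega, by omega⟩
      · rintro (⟨t, ht, h1, h2⟩ | ⟨t, ht, h1, h2⟩) <;>
          exact ⟨by omega, by omega, by omega, by omega⟩
    · rw [hRL n (by omega)]
      ext ⟨i, j⟩
      simp only [Set.mem_setOf_eq, Set.mem_union, Prod.mk.injEq]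
      constructor
      · rintro ⟨hi, hj, hK, hQ⟩
        by_cases h : j ≤ 2*c + 1
        · exact Or.inl ⟨i, by omega, by omega, by omega⟩
        · exact Or.inr ⟨j - (2*c + 2), by omega, by omega, by omega⟩
      · rintro (⟨t, ht, h1, h2⟩ | ⟨t, ht, h1, h2⟩) <;>
          exact ⟨by omega, by omega, by omega, by omega⟩
end

section
/- Let n+1 = 2m+1 with m ≥ 2 and ω = exp(2πi/(n+1)). For ℓ ∈ {0,1,n} let R_ℓ be the set of ordered pairs (i,j) with 0 ≤ i,j ≤ n, i ≠ j, such that ω^j − ω^i = r·exp(−(2ℓ+1)πi/(2(n+1))) for some real r > 0. If m = 2c then: R_0 = {(2c,0),(2c−1,1),…,(c+1,c−1)} ∪ {(2c+1,4c),(2c+2,4c−1),…,(3c,3c+1)}; R_1 = {(2c,4c),(2c+1,4c−1),…,(3c−1,3c+1)} ∪ {(2c−1,0),(2c−2,1),…,(c,c−1)}; R_n = {(4c,2c+2),(4c−1,2c+3),…,(3c+2,3c)} ∪ {(0,2c+1),(1,2c),…,(c,c+1)}. If m = 2c+1 then: R_0 = {(2c+1,0),(2c,1),…,(c+1,c)}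 ∪ {(2c+2,4c+2),(2c+3,4c+1),…,(3c+1,3c+3)}; R_1 = {(2c,0),(2c−1,1),…,(c+1,c−1)} ∪ {(2c+1,4c+2),(2c+2,4c+1),…,(3c+1,3c+2)}; R_n = {(0,2c+2),(1,2c+1),…,(c,c+2)} ∪ {(4c+2,2c+3),(4c+1,2c+4),…,(3c+3,3c+2)}. -/
open Real Complex

lemma exp_sub_exp (a b : ℝ) :
    Complex.exp ((a:ℂ) * Complex.I) - Complex.exp ((b:ℂ) * Complex.I)
      = ((2 * Real.sin ((a - b) / 2) : ℝ) : ℂ)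
        * Complex.exp ((((a + b) / 2 + Real.pi / 2 : ℝ) : ℂ) * Complex.I) := by
  rw [Complex.ext_iff]
  simp only [Complex.sub_re, Complex.sub_im, Complex.exp_ofReal_mul_I_re,
    Complex.exp_ofReal_mul_I_im, Complex.mul_re, Complex.mul_im, Complex.ofReal_re,
    Complex.ofReal_im, zero_mul, mul_zero, sub_zero, zero_add, add_zero]
  constructor
  · rw [Real.cos_sub_cos, Real.cos_add_pi_div_two]
    ring
  · rw [Real.sin_sub_sin, Real.sin_add_pi_div_two]
    try ring

lemma pos_real_iff (s ψ : ℝ) :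
    (∃ r : ℝ, 0 < r ∧ ((s:ℂ)) * Complex.exp ((ψ:ℂ) * Complex.I) = (r:ℂ)) ↔
      ((0 < s ∧ ∃ q : ℤ, ψ = q * (2*Real.pi)) ∨
       (s < 0 ∧ ∃ q : ℤ, ψ = q * (2*Real.pi) + Real.pi)) := by
  constructor
  · rintro ⟨r, hr, h⟩
    rw [Complex.ext_iff] at h
    simp only [Complex.mul_re, Complex.mul_im, Complex.ofReal_re, Complex.ofReal_im,
      Complex.exp_ofReal_mul_I_re, Complex.exp_ofReal_mul_I_im, zero_mul, mul_zero,
      sub_zero, zero_add, add_zero] at h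
    obtain ⟨h1, h2⟩ := h
    have hs : s ≠ 0 := by
      rintro rfl
      simp at h1
      linarith
    have hsin : Real.sin ψ = 0 := by
      rcases mul_eq_zero.mp h2 with h | h
      · exact absurd h hs
      · exact h
    obtain ⟨q, hq⟩ := Real.sin_eq_zero_iff.mp hsin
    rcases Int.even_or_odd q with ⟨k, hk⟩ | ⟨k, hk⟩
    · have hψ : ψ = k * (2*Real.pi) := by
        rw [← hq, hk]; push_cast; ring
      have hcos : Real.cos ψ = 1 := by rw [hψ]; exact Real.cos_int_mul_two_pi k
      rw [hcos, mul_one] at h1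
      exact Or.inl ⟨by linarith, k, hψ⟩
    · have hψ : ψ = k * (2*Real.pi) + Real.pi := by
        rw [← hq, hk]; push_cast; ring
      have hcos : Real.cos ψ = -1 := by rw [hψ]; exact Real.cos_int_mul_two_pi_add_pi k
      rw [hcos] at h1
      exact Or.inr ⟨by linarith, k, hψ⟩
  · rintro (⟨hs, q, hq⟩ | ⟨hs, q, hq⟩)
    · refine ⟨s, hs, ?_⟩
      rw [hq]
      have : ((q * (2*Real.pi) : ℝ) : ℂ) * Complex.I = q * (2 * Real.pi * Complex.I) := by
        push_cast; ring
      rw [this, Complex.exp_int_mul_two_pi_mul_I, mul_one]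
    · refine ⟨-s, by linarith, ?_⟩
      rw [hq]
      have : ((q * (2*Real.pi) + Real.pi : ℝ) : ℂ) * Complex.I
          = q * (2 * Real.pi * Complex.I) + Real.pi * Complex.I := by
        push_cast; ring
      rw [this, Complex.exp_add, Complex.exp_int_mul_two_pi_mul_I, one_mul,
        Complex.exp_pi_mul_I]
      push_cast; ring
lemma pos_mul_exp_iff (s ψ θ : ℝ) :
    (∃ r : ℝ, 0 < r ∧ ((s:ℂ)) * Complex.exp ((ψ:ℂ) * Complex.I)
        = (r:ℂ) * Complex.exp ((θ:ℂ) * Complex.I)) ↔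
      ((0 < s ∧ ∃ q : ℤ, ψ - θ = q * (2*Real.pi)) ∨
       (s < 0 ∧ ∃ q : ℤ, ψ - θ = q * (2*Real.pi) + Real.pi)) := by
  rw [← pos_real_iff s (ψ - θ)]
  apply exists_congr; intro r
  apply and_congr_right'
  have e1 : ((ψ:ℂ)) * Complex.I
      = ((ψ - θ : ℝ):ℂ) * Complex.I + ((θ:ℝ):ℂ) * Complex.I := by push_cast; ring
  rw [e1, Complex.exp_add, ← mul_assoc]
  exact mul_left_inj' (Complex.exp_ne_zero _)

lemma even_case (K n m : ℕ) (hnm : n + 1 = 2*m+1) (hK1 : 1 ≤ K) (hK2 : K ≤ 7*m+1) :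
    (∃ q : ℤ, Real.pi * (K:ℝ) / ((n:ℝ)+1) = q * (2*Real.pi)) ↔ K = 2*(n+1) := by
  constructor
  · rintro ⟨q, hq⟩
    have hNne : ((n:ℝ)+1) ≠ 0 := by positivity
    rw [div_eq_iff hNne] at hq
    have h2 : (K:ℝ) = (q:ℝ) * (2*((n:ℝ)+1)) :=
      mul_left_cancel₀ Real.pi_ne_zero (by linear_combination hq)
    have h3 : (K:ℤ) = q * (2*((n:ℤ)+1)) := by exact_mod_cast h2
    have hq1 : q = 1 := by
      rcases lt_trichotomy q 1 with h|h|h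
      · have h0 : q ≤ 0 := by omega
        have : q * (2*((n:ℤ)+1)) ≤ 0 :=
          mul_nonpos_of_nonpos_of_nonneg h0 (by positivity)
        omega
      · exact h
      · have h2q : (2:ℤ) ≤ q := by omega
        have : 2 * (2*((n:ℤ)+1)) ≤ q * (2*((n:ℤ)+1)) :=
          mul_le_mul_of_nonneg_right h2q (by positivity)
        omega
    subst hq1
    omega
  · rintro rfl
    refine ⟨1, ?_⟩
    have hNne : ((n:ℝ)+1) ≠ 0 := by positivity
    field_simp
    push_cast; ring

lemma odd_case (K n m : ℕ) (hnm : n + 1 = 2*m+1) (hK1 : 1 ≤ K) (hK2 : K ≤ 7*m+1) :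
    (∃ q : ℤ, Real.pi * (K:ℝ) / ((n:ℝ)+1) = q * (2*Real.pi) + Real.pi) ↔
      (K = n+1 ∨ K = 3*(n+1)) := by
  constructor
  · rintro ⟨q, hq⟩
    have hNne : ((n:ℝ)+1) ≠ 0 := by positivity
    rw [div_eq_iff hNne] at hq
    have h2 : (K:ℝ) = (q:ℝ) * (2*((n:ℝ)+1)) + ((n:ℝ)+1) :=
      mul_left_cancel₀ Real.pi_ne_zero (by linear_combination hq)
    have h3 : (K:ℤ) = q * (2*((n:ℤ)+1)) + ((n:ℤ)+1) := by exact_mod_cast h2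
    have hq0 : 0 ≤ q := by
      by_contra h
      have h0 : q ≤ -1 := by omega
      have : q * (2*((n:ℤ)+1)) ≤ (-1) * (2*((n:ℤ)+1)) :=
        mul_le_mul_of_nonneg_right h0 (by positivity)
      omega
    have hq1 : q ≤ 1 := by
      by_contra h
      have h0 : (2:ℤ) ≤ q := by omega
      have : 2 * (2*((n:ℤ)+1)) ≤ q * (2*((n:ℤ)+1)) :=
        mul_le_mul_of_nonneg_right h0 (by positivity)
      omega
    have : q = 0 ∨ q = 1 := by omega
    rcases this with rfl | rfl
    · left; omega
    · right; omega
  · have hNne : ((n:ℝ)+1) ≠ 0 := by positivity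
    rintro (rfl | rfl)
    · refine ⟨0, ?_⟩; field_simp; push_cast; ring
    · refine ⟨1, ?_⟩; field_simp; push_cast; ring

lemma memA (n m ℓ i j : ℕ) (hnm : n + 1 = 2 * m + 1) (ω : ℂ)
    (hω : ω = Complex.exp (2 * Real.pi * Complex.I / (n + 1)))
    (hℓ : ℓ ≤ n) (hi : i ≤ n) (hj : j ≤ n) (hij : i ≠ j) :
    (∃ r : ℝ, 0 < r ∧ ω ^ j - ω ^ i =
        (r : ℂ) * Complex.exp (-((2 * (ℓ : ℂ) + 1) * Real.pi * Complex.I) / (2 * (n + 1)))) ↔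
    ((i < j ∧ i+j+ℓ+m+1 = 2*(n+1)) ∨
     (j < i ∧ (i+j+ℓ+m+1 = n+1 ∨ i+j+ℓ+m+1 = 3*(n+1)))) := by
  have hNne : ((n:ℝ)+1) ≠ 0 := by positivity
  have hNCne : ((n:ℂ)+1) ≠ 0 := by
    exact_mod_cast Nat.cast_add_one_ne_zero (R := ℂ) n
  have hωpow : ∀ k : ℕ, ω ^ k
      = Complex.exp (((2 * Real.pi * (k:ℝ) / ((n:ℝ)+1) : ℝ) : ℂ) * Complex.I) := by
    intro k
    rw [hω, ← Complex.exp_nat_mul]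
    congr 1
    push_cast
    field_simp
  have hθ : Complex.exp (-((2 * (ℓ : ℂ) + 1) * Real.pi * Complex.I) / (2 * (n + 1)))
      = Complex.exp (((-((2 * (ℓ:ℝ) + 1) * Real.pi / (2 * ((n:ℝ)+1))) : ℝ) : ℂ) * Complex.I) := by
    congr 1
    push_cast
    field_simp
    try ring
  rw [hωpow j, hωpow i, exp_sub_exp, hθ, pos_mul_exp_iff]
  have hψ : (2 * Real.pi * (j:ℝ) / ((n:ℝ)+1) + 2 * Real.pi * (i:ℝ) / ((n:ℝ)+1)) / 2
        + Real.pi / 2 - -((2 * (ℓ:ℝ) + 1) * Real.pi / (2 * ((n:ℝ)+1)))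
      = Real.pi * ((i+j+ℓ+m+1 : ℕ) : ℝ) / ((n:ℝ)+1) := by
    have hNm : ((n:ℝ)+1) = 2*(m:ℝ)+1 := by exact_mod_cast hnm
    rw [hNm]
    have h21 : (2*(m:ℝ)+1) ≠ 0 := by positivity
    field_simp
    push_cast
    ring
  rw [hψ, even_case (i+j+ℓ+m+1) n m hnm (by omega) (by omega),
    odd_case (i+j+ℓ+m+1) n m hnm (by omega) (by omega)]
  have hA : (2 * Real.pi * (j:ℝ) / ((n:ℝ)+1) - 2 * Real.pi * (i:ℝ) / ((n:ℝ)+1)) / 2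
      = Real.pi * ((j:ℝ) - (i:ℝ)) / ((n:ℝ)+1) := by ring
  rw [hA]
  have hNpos : (0:ℝ) < (n:ℝ)+1 := by positivity
  have hspos : ∀ a b : ℕ, a < b → b ≤ n →
      0 < Real.sin (Real.pi * ((b:ℝ) - (a:ℝ)) / ((n:ℝ)+1)) := by
    intro a b hab hb
    apply Real.sin_pos_of_pos_of_lt_pi
    · have hab' : (a:ℝ) < (b:ℝ) := by exact_mod_cast hab
      apply div_pos (mul_pos Real.pi_pos (by linarith)) hNpos
    · rw [div_lt_iff₀ hNpos]
      have h1 : ((b:ℝ) - (a:ℝ)) < (n:ℝ)+1 := by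
        have : (b:ℝ) ≤ (n:ℝ) := by exact_mod_cast hb
        have : (0:ℝ) ≤ (a:ℝ) := by positivity
        linarith
      nlinarith [Real.pi_pos]
  have hsneg : j < i → Real.sin (Real.pi * ((j:ℝ) - (i:ℝ)) / ((n:ℝ)+1)) < 0 := by
    intro hji
    have : Real.pi * ((j:ℝ) - (i:ℝ)) / ((n:ℝ)+1)
        = -(Real.pi * ((i:ℝ) - (j:ℝ)) / ((n:ℝ)+1)) := by ring
    rw [this, Real.sin_neg, neg_lt, neg_zero]
    exact hspos j i hji hi
  constructor
  · rintro (⟨hs, h⟩ | ⟨hs, h⟩)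
    · refine Or.inl ⟨?_, h⟩
      rcases Nat.lt_trichotomy i j with h' | h' | h'
      · exact h'
      · exact absurd h' hij
      · exact absurd hs (by have := hsneg h'; linarith)
    · refine Or.inr ⟨?_, h⟩
      rcases Nat.lt_trichotomy j i with h' | h' | h'
      · exact h'
      · exact absurd h'.symm hij
      · exact absurd hs (by have := hspos i j h' hj; linarith)
  · rintro (⟨hlt, h⟩ | ⟨hlt, h⟩)
    · exact Or.inl ⟨by have := hspos i j hlt hj; linarith, h⟩
    · exact Or.inr ⟨by have := hsneg hlt; linarith, h⟩
lemma shape1 (i j A T : ℕ) (hTA : T ≤ A) :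
    (∃ t, t < T ∧ (i, j) = (A - t, t)) ↔ (j < T ∧ i + j = A) := by
  constructor
  · rintro ⟨t, ht, hp⟩
    rw [Prod.mk.injEq] at hp
    omega
  · rintro ⟨h1, h2⟩
    exact ⟨j, h1, by rw [Prod.mk.injEq]; omega⟩

lemma shape2 (i j A B T : ℕ) (hTB : T ≤ B) :
    (∃ t, t < T ∧ (i, j) = (A + t, B - t)) ↔ (A ≤ i ∧ i < A + T ∧ i + j = A + B) := by
  constructor
  · rintro ⟨t, ht, hp⟩
    rw [Prod.mk.injEq] at hp
    omega
  · rintro ⟨h1, h2, h3⟩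
    exact ⟨i - A, by omega, by rw [Prod.mk.injEq]; omega⟩

lemma shape3 (i j A B T : ℕ) (hTA : T ≤ A) :
    (∃ t, t < T ∧ (i, j) = (A - t, B + t)) ↔ (B ≤ j ∧ j < B + T ∧ i + j = A + B) := by
  constructor
  · rintro ⟨t, ht, hp⟩
    rw [Prod.mk.injEq] at hp
    omega
  · rintro ⟨h1, h2, h3⟩
    exact ⟨j - B, by omega, by rw [Prod.mk.injEq]; omega⟩

lemma shape4 (i j B T : ℕ) (hTB : T ≤ B) :
    (∃ t, t < T ∧ (i, j) = (t, B - t)) ↔ (i < T ∧ i + j = B) := by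
  constructor
  · rintro ⟨t, ht, hp⟩
    rw [Prod.mk.injEq] at hp
    omega
  · rintro ⟨h1, h2⟩
    exact ⟨i, h1, by rw [Prod.mk.injEq]; omega⟩

/-- explicit description of the roots supported on the singular directions
`θ_ℓ = -(2ℓ+1)π/(2(n+1))`, `ℓ ∈ {0, 1, n}`, in the case `n + 1 = 2m + 1`. -/
theorem stmt_5 (n m c : ℕ) (hm : 2 ≤ m) (hnm : n + 1 = 2 * m + 1)
    (ω : ℂ) (hω : ω = Complex.exp (2 * Real.pi * Complex.I / (n + 1)))
    (R : ℕ → Set (ℕ × ℕ))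
    (hR : ∀ ℓ, R ℓ = {p | p.1 ≤ n ∧ p.2 ≤ n ∧ p.1 ≠ p.2 ∧
      ∃ r : ℝ, 0 < r ∧ ω ^ p.2 - ω ^ p.1 =
        (r : ℂ) * Complex.exp (-((2 * (ℓ : ℂ) + 1) * Real.pi * Complex.I) / (2 * (n + 1)))}) :
    (m = 2 * c →
      (R 0 = {p | ∃ t < c, p = (2*c - t, t)} ∪ {p | ∃ t < c, p = (2*c + 1 + t, 4*c - t)} ∧
       R 1 = {p | ∃ t < c, p = (2*c + t, 4*c - t)} ∪ {p | ∃ t < c, p = (2*c - 1 - t, t)} ∧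
       R n = {p | ∃ t < c - 1, p = (4*c - t, 2*c + 2 + t)} ∪ {p | ∃ t < c + 1, p = (t, 2*c + 1 - t)})) ∧
    (m = 2 * c + 1 →
      (R 0 = {p | ∃ t < c + 1, p = (2*c + 1 - t, t)} ∪ {p | ∃ t < c, p = (2*c + 2 + t, 4*c + 2 - t)} ∧
       R 1 = {p | ∃ t < c, p = (2*c - t, t)} ∪ {p | ∃ t < c + 1, p = (2*c + 1 + t, 4*c + 2 - t)} ∧
       R n = {p | ∃ t < c + 1, p = (t, 2*c + 2 - t)} ∪ {p | ∃ t < c, p = (4*c + 2 - t, 2*c + 3 + t)})) := by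
  have hmem : ∀ ℓ, ℓ ≤ n → ∀ i j : ℕ, ((i, j) ∈ R ℓ ↔
      (i ≤ n ∧ j ≤ n ∧ ((i < j ∧ i+j+ℓ+m+1 = 2*(n+1)) ∨
        (j < i ∧ (i+j+ℓ+m+1 = n+1 ∨ i+j+ℓ+m+1 = 3*(n+1)))))) := by
    intro ℓ hℓ i j
    rw [hR]
    simp only [Set.mem_setOf_eq]
    constructor
    · rintro ⟨hi, hj, hij, hr⟩
      exact ⟨hi, hj, (memA n m ℓ i j hnm ω hω hℓ hi hj hij).mp hr⟩
    · rintro ⟨hi, hj, hc⟩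
      exact ⟨hi, hj, by omega, (memA n m ℓ i j hnm ω hω hℓ hi hj (by omega)).mpr hc⟩
  constructor
  · intro hmc
    subst hmc
    have hc1 : 1 ≤ c := by omega
    refine ⟨?_, ?_, ?_⟩
    · ext ⟨i, j⟩
      rw [Set.mem_union, hmem 0 (by omega) i j]
      simp only [Set.mem_setOf_eq]
      rw [shape1 i j (2*c) c (by omega), shape2 i j (2*c+1) (4*c) c (by omega)]
      omega
    · ext ⟨i, j⟩
      rw [Set.mem_union, hmem 1 (by omega) i j]
      simp only [Set.mem_setOf_eq]
      rw [shape2 i j (2*c) (4*c) c (by omega), shape1 i j (2*c-1) c (by omega)]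
      omega
    · ext ⟨i, j⟩
      rw [Set.mem_union, hmem n (le_refl n) i j]
      simp only [Set.mem_setOf_eq]
      rw [shape3 i j (4*c) (2*c+2) (c-1) (by omega), shape4 i j (2*c+1) (c+1) (by omega)]
      omega
  · intro hmc
    subst hmc
    have hc1 : 1 ≤ c := by omega
    refine ⟨?_, ?_, ?_⟩
    · ext ⟨i, j⟩
      rw [Set.mem_union, hmem 0 (by omega) i j]
      simp only [Set.mem_setOf_eq]
      rw [shape1 i j (2*c+1) (c+1) (by omega), shape2 i j (2*c+2) (4*c+2) c (by omega)]
      omega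
    · ext ⟨i, j⟩
      rw [Set.mem_union, hmem 1 (by omega) i j]
      simp only [Set.mem_setOf_eq]
      rw [shape1 i j (2*c) c (by omega), shape2 i j (2*c+1) (4*c+2) (c+1) (by omega)]
      omega
    · ext ⟨i, j⟩
      rw [Set.mem_union, hmem n (le_refl n) i j]
      simp only [Set.mem_setOf_eq]
      rw [shape4 i j (2*c+2) (c+1) (by omega), shape3 i j (4*c+2) (2*c+3) c (by omega)]
      omega
end

section
/- Let n ≥ 2, ω = exp(2πi/(n+1)), and fix any unit complex number u. Let R = {(i,j) : 0 ≤ i,j ≤ n, i ≠ j, ω^j − ω^i = r·u for some real r > 0} be the set of pairs supported on the direction u. Then any two distinct pairs in R are disjoint: if (i,j), (k,l) ∈ R and (i,j) ≠ (k,l), then {i,j} ∩ {k,l} = ∅. Consequently E_{i,j}·E_{k,l} = 0 = E_{k,l}·E_{i,j}, and the unipotent matrices I + s·E_{i,j} and I + t·E_{k,l} (s, t ∈ ℂ) commute; hence the product of unipotent Stokes-factor groups ∏_{(i,j)∈R} exp(ℂ·E_{i,j}) is independent of the ordering of the factors. -/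
open Matrix

/-- A point on the unit circle of the form `a + s•u` with `a`, `u` on the unit circle and
`s ≠ 0` real determines `s` uniquely: `s = -2 * Re(a * conj u)`. -/
lemma stmt8_chord (u a : ℂ) (hu : ‖u‖ = 1) (ha : ‖a‖ = 1)
    (s : ℝ) (hs0 : s ≠ 0) (hcirc : ‖a + (s : ℂ) * u‖ = 1) :
    s = -2 * (a * (starRingEnd ℂ) u).re := by
  have h1 : Complex.normSq (a + (s : ℂ) * u) = 1 := by
    rw [← Complex.sq_norm, hcirc]; norm_num
  have h2 : Complex.normSq a = 1 := by rw [← Complex.sq_norm, ha]; norm_num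
  have h3 : Complex.normSq u = 1 := by rw [← Complex.sq_norm, hu]; norm_num
  rw [Complex.normSq_add, h2] at h1
  have h4 : Complex.normSq ((s : ℂ) * u) = s ^ 2 := by
    rw [Complex.normSq_mul, h3, Complex.normSq_ofReal]; ring
  have h5 : (a * (starRingEnd ℂ) ((s : ℂ) * u)).re = s * (a * (starRingEnd ℂ) u).re := by
    rw [_root_.map_mul, Complex.conj_ofReal]
    have : a * ((s : ℂ) * (starRingEnd ℂ) u) = (s : ℂ) * (a * (starRingEnd ℂ) u) := by ring
    rw [this]; simp [Complex.ofReal_mul, Complex.mul_re]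
  rw [h4, h5] at h1
  have h6 : s * (s + 2 * (a * (starRingEnd ℂ) u).re) = 0 := by nlinarith
  rcases mul_eq_zero.1 h6 with h | h
  · exact absurd h hs0
  · linarith

/-- Two points of the unit circle lying on the same punctured ray-line through a unit-circle
point `a` in direction `u` coincide (in parameter). -/
lemma stmt8_three_pt (u a : ℂ) (hu : ‖u‖ = 1) (ha : ‖a‖ = 1)
    (s t : ℝ) (hs : s ≠ 0) (ht : t ≠ 0)
    (h1 : ‖a + (s : ℂ) * u‖ = 1) (h2 : ‖a + (t : ℂ) * u‖ = 1) :
    s = t := by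
  rw [stmt8_chord u a hu ha s hs h1, stmt8_chord u a hu ha t ht h2]

/-- any two distinct roots supported on a common direction `u` are disjoint
pairs; consequently the corresponding elementary matrices multiply to zero and the
associated unipotent Stokes factors commute. -/
theorem stmt_8 (n : ℕ) (hn : 2 ≤ n)
    (ω u : ℂ) (hω : ω = Complex.exp (2 * Real.pi * Complex.I / (n + 1)))
    (hu : ‖u‖ = 1)
    (R : Set (Fin (n + 1) × Fin (n + 1)))
    (hR : R = {p | p.1 ≠ p.2 ∧ ∃ r : ℝ, 0 < r ∧
      ω ^ (p.2 : ℕ) - ω ^ (p.1 : ℕ) = (r : ℂ) * u}) :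
    (∀ p q, p ∈ R → q ∈ R → p ≠ q →
      p.1 ≠ q.1 ∧ p.1 ≠ q.2 ∧ p.2 ≠ q.1 ∧ p.2 ≠ q.2) ∧
    (∀ p q, p ∈ R → q ∈ R → p ≠ q →
      Matrix.single p.1 p.2 (1 : ℂ) * Matrix.single q.1 q.2 (1 : ℂ) = 0 ∧
      Matrix.single q.1 q.2 (1 : ℂ) * Matrix.single p.1 p.2 (1 : ℂ) = 0) ∧
    ∀ p q, p ∈ R → q ∈ R → ∀ s t : ℂ,
      (1 + s • Matrix.single p.1 p.2 (1 : ℂ)) *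
        (1 + t • Matrix.single q.1 q.2 (1 : ℂ)) =
      (1 + t • Matrix.single q.1 q.2 (1 : ℂ)) *
        (1 + s • Matrix.single p.1 p.2 (1 : ℂ)) := by
  subst hR
  -- `ω` is a primitive (n+1)-th root of unity
  have hprim : IsPrimitiveRoot ω (n + 1) := by
    have := Complex.isPrimitiveRoot_exp (n + 1) (Nat.succ_ne_zero n)
    rw [hω]
    convert this using 3
    push_cast; ring
  have habsω : ‖ω‖ = 1 := by
    have h1 : ω ^ (n + 1) = 1 := hprim.pow_eq_one
    have h2 : ‖ω‖ ^ (n + 1) = 1 := by rw [← norm_pow, h1, norm_one]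
    rcases lt_trichotomy (‖ω‖) 1 with h | h | h
    · have := pow_lt_one₀ (norm_nonneg ω) h (Nat.succ_ne_zero n)
      rw [h2] at this; exact absurd this (lt_irrefl 1)
    · exact h
    · have := one_lt_pow₀ h (Nat.succ_ne_zero n)
      rw [h2] at this; exact absurd this (lt_irrefl 1)
  have habs : ∀ k : ℕ, ‖ω ^ k‖ = 1 := by
    intro k; rw [norm_pow, habsω, one_pow]
  have hinj : ∀ a b : Fin (n + 1), ω ^ (a : ℕ) = ω ^ (b : ℕ) → a = b := by
    intro a b h
    exact Fin.ext (hprim.pow_inj a.is_lt b.is_lt h)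
  -- main disjointness claim
  have main : ∀ p q : Fin (n + 1) × Fin (n + 1), p ∈ {p : Fin (n+1) × Fin (n+1) | p.1 ≠ p.2 ∧ ∃ r : ℝ, 0 < r ∧
      ω ^ (p.2 : ℕ) - ω ^ (p.1 : ℕ) = (r : ℂ) * u} → q ∈ {p : Fin (n+1) × Fin (n+1) | p.1 ≠ p.2 ∧ ∃ r : ℝ, 0 < r ∧
      ω ^ (p.2 : ℕ) - ω ^ (p.1 : ℕ) = (r : ℂ) * u} → p ≠ q →
      p.1 ≠ q.1 ∧ p.1 ≠ q.2 ∧ p.2 ≠ q.1 ∧ p.2 ≠ q.2 := by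
    rintro ⟨i, j⟩ ⟨k, l⟩ ⟨hij, r, hr, hre⟩ ⟨hkl, r', hr', hre'⟩ hpq
    simp only at hij hkl hre hre' ⊢
    have hB : ω ^ (j : ℕ) = ω ^ (i : ℕ) + (r : ℂ) * u := by
      have := sub_eq_iff_eq_add.1 hre; linear_combination this
    have hD : ω ^ (l : ℕ) = ω ^ (k : ℕ) + (r' : ℂ) * u := by
      have := sub_eq_iff_eq_add.1 hre'; linear_combination this
    refine ⟨?_, ?_, ?_, ?_⟩
    · -- i ≠ k
      rintro rfl
      have h1 : ‖ω ^ (i : ℕ) + (r : ℂ) * u‖ = 1 := by rw [← hB]; exact habs _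
      have h2 : ‖ω ^ (i : ℕ) + (r' : ℂ) * u‖ = 1 := by rw [← hD]; exact habs _
      have := stmt8_three_pt u (ω ^ (i : ℕ)) hu (habs _) r r' (ne_of_gt hr) (ne_of_gt hr') h1 h2
      subst this
      have : j = l := hinj _ _ (by rw [hB, hD])
      exact hpq (by rw [this])
    · -- i ≠ l
      rintro rfl
      -- ω^i = ω^k + r' u, ω^j = ω^k + (r'+r) u
      have hB' : ω ^ (j : ℕ) = ω ^ (k : ℕ) + ((r' + r : ℝ) : ℂ) * u := by
        rw [hB, hD]; push_cast; ring
      have h1 : ‖ω ^ (k : ℕ) + (r' : ℂ) * u‖ = 1 := by rw [← hD]; exact habs _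
      have h2 : ‖ω ^ (k : ℕ) + ((r' + r : ℝ) : ℂ) * u‖ = 1 := by
        rw [← hB']; exact habs _
      have := stmt8_three_pt u (ω ^ (k : ℕ)) hu (habs _) r' (r' + r) (ne_of_gt hr')
        (ne_of_gt (by linarith)) h1 h2
      linarith
    · -- j ≠ k
      rintro rfl
      have hD' : ω ^ (l : ℕ) = ω ^ (i : ℕ) + ((r + r' : ℝ) : ℂ) * u := by
        rw [hD, hB]; push_cast; ring
      have h1 : ‖ω ^ (i : ℕ) + (r : ℂ) * u‖ = 1 := by rw [← hB]; exact habs _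
      have h2 : ‖ω ^ (i : ℕ) + ((r + r' : ℝ) : ℂ) * u‖ = 1 := by
        rw [← hD']; exact habs _
      have := stmt8_three_pt u (ω ^ (i : ℕ)) hu (habs _) r (r + r') (ne_of_gt hr)
        (ne_of_gt (by linarith)) h1 h2
      linarith
    · -- j ≠ l
      rintro rfl
      have hA : ω ^ (i : ℕ) = ω ^ (j : ℕ) + ((-r : ℝ) : ℂ) * u := by
        rw [hB]; push_cast; ring
      have hC : ω ^ (k : ℕ) = ω ^ (j : ℕ) + ((-r' : ℝ) : ℂ) * u := by
        rw [hD]; push_cast; ring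
      have h1 : ‖ω ^ (j : ℕ) + ((-r : ℝ) : ℂ) * u‖ = 1 := by rw [← hA]; exact habs _
      have h2 : ‖ω ^ (j : ℕ) + ((-r' : ℝ) : ℂ) * u‖ = 1 := by rw [← hC]; exact habs _
      have heq := stmt8_three_pt u (ω ^ (j : ℕ)) hu (habs _) (-r) (-r')
        (by linarith) (by linarith) h1 h2
      have hrr : r = r' := by linarith
      subst hrr
      have : i = k := hinj _ _ (by rw [hA, hC])
      exact hpq (by rw [this])
  refine ⟨main, ?_, ?_⟩
  · intro p q hp hq hpq
    obtain ⟨_, h12, h21, _⟩ := main p q hp hq hpq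
    exact ⟨Matrix.single_mul_single_of_ne _ _ _ _ h21 _,
      Matrix.single_mul_single_of_ne _ _ _ _ (Ne.symm h12) _⟩
  · intro p q hp hq s t
    by_cases hpq : p = q
    · subst hpq
      set E := Matrix.single p.1 p.2 (1 : ℂ)
      have h : (s • E) * (t • E) = (t • E) * (s • E) := by
        rw [smul_mul_assoc, mul_smul_comm, smul_mul_assoc, mul_smul_comm, smul_smul, smul_smul,
          mul_comm]
      simp only [mul_add, add_mul, one_mul, mul_one]
      rw [h]; abel
    · obtain ⟨_, h12, h21, _⟩ := main p q hp hq hpq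
      have hEF : Matrix.single p.1 p.2 (1 : ℂ) * Matrix.single q.1 q.2 (1 : ℂ) = 0 :=
        Matrix.single_mul_single_of_ne _ _ _ _ h21 _
      have hFE : Matrix.single q.1 q.2 (1 : ℂ) * Matrix.single p.1 p.2 (1 : ℂ) = 0 :=
        Matrix.single_mul_single_of_ne _ _ _ _ (Ne.symm h12) _
      have h1 : (s • Matrix.single p.1 p.2 (1 : ℂ)) * (t • Matrix.single q.1 q.2 (1 : ℂ)) = 0 := by
        rw [smul_mul_assoc, mul_smul_comm, hEF, smul_zero, smul_zero]
      have h2 : (t • Matrix.single q.1 q.2 (1 : ℂ)) * (s • Matrix.single p.1 p.2 (1 : ℂ)) = 0 := by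
        rw [smul_mul_assoc, mul_smul_comm, hFE, smul_zero, smul_zero]
      simp only [mul_add, add_mul, one_mul, mul_one, h1, h2]
      abel
end

section
/- Let n ≥ 2 and ω = exp(2πi/(n+1)). For ℓ ∈ {0,1,n} let θ_ℓ = −(ℓ+1)π/(n+1) if n+1 is even, and θ_ℓ = −(2ℓ+1)π/(2(n+1)) if n+1 is odd, and let R_ℓ = {(i,j) : 0 ≤ i,j ≤ n, i ≠ j, ω^j − ω^i = r·e^{iθ_ℓ} for some real r > 0}. The transpositions (i j) for (i,j) ∈ R_0 are pairwise disjoint; let p be the permutation of {0,…,n} equal to their product. Then {(p(i), p(j)) : (i,j) ∈ R_n} = R_1. -/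
open Matrix

/-- the transpositions coming from `R 0` are pairwise disjoint, and the
permutation `p` given by their product maps `R n` onto `R 1`. -/
theorem stmt_9 (n : ℕ) (hn : 2 ≤ n)
    (ω : ℂ) (hω : ω = Complex.exp (2 * Real.pi * Complex.I / (n + 1)))
    (θ : ℕ → ℝ)
    (hθ : ∀ ℓ, θ ℓ = if Even (n + 1) then -(((ℓ : ℝ) + 1) * Real.pi) / (n + 1)
      else -((2 * (ℓ : ℝ) + 1) * Real.pi) / (2 * (n + 1)))
    (R : ℕ → Set (ZMod (n + 1) × ZMod (n + 1)))
    (hR : ∀ ℓ, R ℓ = {p | p.1 ≠ p.2 ∧ ∃ r : ℝ, 0 < r ∧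
      ω ^ (p.2).val - ω ^ (p.1).val = (r : ℂ) * Complex.exp ((θ ℓ : ℂ) * Complex.I)}) :
    (∀ p q, p ∈ R 0 → q ∈ R 0 → p ≠ q →
      p.1 ≠ q.1 ∧ p.1 ≠ q.2 ∧ p.2 ≠ q.1 ∧ p.2 ≠ q.2) ∧
    ∀ p : Equiv.Perm (ZMod (n + 1)),
      (∀ i j : ZMod (n + 1), (i, j) ∈ R 0 → p i = j ∧ p j = i) →
      (∀ x : ZMod (n + 1), (∀ i j : ZMod (n + 1), (i, j) ∈ R 0 → x ≠ i ∧ x ≠ j) → p x = x) →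
      {q : ZMod (n + 1) × ZMod (n + 1) | ∃ i j : ZMod (n + 1), (i, j) ∈ R n ∧ q = (p i, p j)}
        = R 1 := by
  have hN0 : n + 1 ≠ 0 := by omega
  haveI : NeZero (n + 1) := ⟨hN0⟩
  set E : ℕ → ℂ := fun ℓ => Complex.exp ((θ ℓ : ℂ) * Complex.I) with hEdef
  have hR' : ∀ ℓ (i j : ZMod (n + 1)), (i, j) ∈ R ℓ ↔
      (i ≠ j ∧ ∃ r : ℝ, 0 < r ∧ ω ^ j.val - ω ^ i.val = (r : ℂ) * E ℓ) := by
    intro ℓ i j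
    rw [hR ℓ]
    simp only [Set.mem_setOf_eq, hEdef]
  have hprim : IsPrimitiveRoot ω (n + 1) := by
    have h := Complex.isPrimitiveRoot_exp (n + 1) hN0
    rw [show (((n : ℕ) + 1 : ℕ) : ℂ) = (n : ℂ) + 1 by push_cast; ring] at h
    rwa [hω]
  have hωmod : ∀ a : ℕ, ω ^ a = ω ^ (a % (n + 1)) := by
    intro a
    conv_lhs => rw [← Nat.div_add_mod a (n + 1)]
    rw [pow_add, pow_mul, hprim.pow_eq_one, one_pow, one_mul]
  have hval : ∀ u v : ZMod (n + 1), ω ^ u.val * ω ^ v.val = ω ^ (u + v).val := by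
    intro u v
    rw [← pow_add, hωmod (u.val + v.val), ZMod.val_add]
  have hcst : ∀ k : ℕ, ω ^ ((k : ZMod (n + 1))).val = ω ^ k := by
    intro k
    rw [ZMod.val_natCast, ← hωmod]
  have hinj : ∀ u v : ZMod (n + 1), ω ^ u.val = ω ^ v.val → u = v := by
    intro u v h
    exact ZMod.val_injective _ (hprim.pow_inj u.val_lt v.val_lt h)
  have hω' : ω = Complex.exp (((2 * Real.pi / (n + 1) : ℝ) : ℂ) * Complex.I) := by
    rw [hω]; congr 1; push_cast; ring
  have habsω : ‖ω‖ = 1 := by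
    rw [hω']; exact Complex.norm_exp_ofReal_mul_I _
  have hω0 : ω ≠ 0 := by
    rw [hω]; exact Complex.exp_ne_zero _
  have hunit : ∀ k : ℕ, ω ^ k * (starRingEnd ℂ) (ω ^ k) = 1 := by
    intro k
    rw [Complex.mul_conj, Complex.normSq_eq_norm_sq, norm_pow, habsω, one_pow]
    norm_num
  have hconjE : ∀ ℓ : ℕ, E ℓ * (starRingEnd ℂ) (E ℓ) = 1 := by
    intro ℓ
    rw [Complex.mul_conj, Complex.normSq_eq_norm_sq, hEdef]
    simp only [Complex.norm_exp_ofReal_mul_I]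
    norm_num
  have hE0 : ∀ ℓ : ℕ, E ℓ ≠ 0 := fun ℓ => by rw [hEdef]; exact Complex.exp_ne_zero _
  -- forward: membership forces the product of the two roots of unity
  have hfwd : ∀ (ℓ : ℕ) (i j : ZMod (n + 1)), (i, j) ∈ R ℓ →
      ω ^ i.val * ω ^ j.val = -(E ℓ) ^ 2 := by
    intro ℓ i j hij
    obtain ⟨hne, r, hr, heq⟩ := (hR' ℓ i j).mp hij
    have ha := hunit i.val
    have hb := hunit j.val
    have hEc := hconjE ℓ
    have hconj : (starRingEnd ℂ) (ω ^ j.val) - (starRingEnd ℂ) (ω ^ i.val)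
        = (r : ℂ) * (starRingEnd ℂ) (E ℓ) := by
      have := congrArg (starRingEnd ℂ) heq
      simpa [map_sub, Complex.conj_ofReal] using this
    have hkey : (ω ^ j.val - ω ^ i.val) ^ 2 = -(ω ^ i.val * ω ^ j.val) *
        ((ω ^ j.val - ω ^ i.val) * ((starRingEnd ℂ) (ω ^ j.val) - (starRingEnd ℂ) (ω ^ i.val))) := by
      linear_combination (ω ^ j.val * (ω ^ i.val - ω ^ j.val)) * ha +
        (ω ^ i.val * (ω ^ j.val - ω ^ i.val)) * hb
    rw [heq, hconj] at hkey
    have hr0 : (r : ℂ) ≠ 0 := by exact_mod_cast hr.ne'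
    have h2 : (r : ℂ) ^ 2 * ((E ℓ) ^ 2 + (ω ^ i.val * ω ^ j.val) * (E ℓ * (starRingEnd ℂ) (E ℓ))) = 0 := by
      linear_combination hkey
    have h3 : (E ℓ) ^ 2 + (ω ^ i.val * ω ^ j.val) * (E ℓ * (starRingEnd ℂ) (E ℓ)) = 0 := by
      rcases mul_eq_zero.mp h2 with h | h
      · exact absurd h (pow_ne_zero _ hr0)
      · exact h
    linear_combination h3 + (-(ω ^ i.val * ω ^ j.val)) * hEc
  -- backward: correct product forces membership in one of the two orders
  have hbwd : ∀ x y : ZMod (n + 1), x ≠ y → ω ^ x.val * ω ^ y.val = -(E 0) ^ 2 →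
      (x, y) ∈ R 0 ∨ (y, x) ∈ R 0 := by
    intro x y hxy hprod
    have hab : ω ^ y.val - ω ^ x.val ≠ 0 := by
      intro h
      have hxy' : ω ^ x.val = ω ^ y.val := by linear_combination -h
      exact hxy (hinj x y hxy')
    have hm0 : 0 < ‖ω ^ y.val - ω ^ x.val‖ := norm_pos_iff.mpr hab
    have ha := hunit x.val
    have hb := hunit y.val
    have h1 : (ω ^ y.val - ω ^ x.val) ^ 2 = -(ω ^ x.val * ω ^ y.val) *
        ((ω ^ y.val - ω ^ x.val) * ((starRingEnd ℂ) (ω ^ y.val) - (starRingEnd ℂ) (ω ^ x.val))) := by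
      linear_combination (ω ^ y.val * (ω ^ x.val - ω ^ y.val)) * ha +
        (ω ^ x.val * (ω ^ y.val - ω ^ x.val)) * hb
    have h2 : (ω ^ y.val - ω ^ x.val) * ((starRingEnd ℂ) (ω ^ y.val) - (starRingEnd ℂ) (ω ^ x.val))
        = ((‖ω ^ y.val - ω ^ x.val‖ : ℝ) : ℂ) ^ 2 := by
      rw [← map_sub]
      rw [Complex.mul_conj, Complex.normSq_eq_norm_sq]
      push_cast
      ring
    have hsq : (ω ^ y.val - ω ^ x.val) ^ 2
        = (((‖ω ^ y.val - ω ^ x.val‖ : ℝ) : ℂ) * E 0) ^ 2 := by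
      rw [h1, h2, hprod]; ring
    have hfac : (ω ^ y.val - ω ^ x.val - ((‖ω ^ y.val - ω ^ x.val‖ : ℝ) : ℂ) * E 0) *
        (ω ^ y.val - ω ^ x.val + ((‖ω ^ y.val - ω ^ x.val‖ : ℝ) : ℂ) * E 0) = 0 := by
      linear_combination hsq
    rcases mul_eq_zero.mp hfac with h | h
    · left
      exact (hR' 0 x y).mpr ⟨hxy, _, hm0, by linear_combination h⟩
    · right
      exact (hR' 0 y x).mpr ⟨hxy.symm, _, hm0, by linear_combination -h⟩
  -- the analytic identities
  have hωc : ∀ k : ℕ, ω ^ k = Complex.exp ((k : ℂ) * (2 * Real.pi * Complex.I / (n + 1))) := by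
    intro k
    rw [hω, ← Complex.exp_nat_mul]
  have key : ∃ c : ℕ, -(E 0) ^ 2 = ω ^ c ∧ E 1 * E n = ω ^ c := by
    rcases Nat.even_or_odd (n + 1) with he | ho
    · obtain ⟨m, hm⟩ := he
      have hm2 : 2 ≤ m := by omega
      have hEv : Even (n + 1) := ⟨m, hm⟩
      have hmC : (n : ℂ) + 1 = 2 * (m : ℂ) := by
        have h := congrArg (Nat.cast : ℕ → ℂ) hm
        push_cast at h
        linear_combination h
      have hm0 : (m : ℂ) ≠ 0 := by
        intro h
        rw [h] at hmC
        norm_num at hmC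
        exact hN0 (by exact_mod_cast hmC)
      refine ⟨m - 1, ?_, ?_⟩
      · have h1 : -(E 0) ^ 2 = Complex.exp ((Real.pi : ℂ) * Complex.I +
            (((θ 0 : ℝ) : ℂ) * Complex.I + ((θ 0 : ℝ) : ℂ) * Complex.I)) := by
          rw [Complex.exp_add, Complex.exp_add, Complex.exp_pi_mul_I, hEdef]
          ring
        rw [h1, hωc (m - 1)]
        congr 1
        rw [hθ 0, if_pos hEv, Nat.cast_sub (by omega : 1 ≤ m)]
        push_cast
        rw [show (n : ℂ) = 2 * (m : ℂ) - 1 by linear_combination hmC]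
        field_simp
        ring
      · rw [hωc (m - 1), hEdef]
        simp only []
        have h2 : ((m - 1 : ℕ) : ℂ) * (2 * (Real.pi : ℂ) * Complex.I / ((n : ℂ) + 1)) =
            (((θ 1 : ℝ) : ℂ) * Complex.I + ((θ n : ℝ) : ℂ) * Complex.I) +
              2 * (Real.pi : ℂ) * Complex.I := by
          rw [hθ 1, hθ n, if_pos hEv, if_pos hEv,
            Nat.cast_sub (by omega : 1 ≤ m)]
          push_cast
          rw [show (n : ℂ) = 2 * (m : ℂ) - 1 by linear_combination hmC]
          field_simp
          ring
        rw [h2, Complex.exp_add, Complex.exp_two_pi_mul_I, mul_one, Complex.exp_add]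
    · obtain ⟨m, hm⟩ := ho
      have hm1 : 1 ≤ m := by omega
      have hodd : ¬ Even (n + 1) := by
        rw [Nat.even_iff, hm]
        omega
      have hmC : (n : ℂ) + 1 = 2 * (m : ℂ) + 1 := by
        have h := congrArg (Nat.cast : ℕ → ℂ) hm
        push_cast at h
        linear_combination h
      have hm0 : (2 * (m : ℂ) + 1) ≠ 0 := by
        rw [← hmC]
        intro h
        exact hN0 (by exact_mod_cast h)
      refine ⟨m, ?_, ?_⟩
      · have h1 : -(E 0) ^ 2 = Complex.exp ((Real.pi : ℂ) * Complex.I +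
            (((θ 0 : ℝ) : ℂ) * Complex.I + ((θ 0 : ℝ) : ℂ) * Complex.I)) := by
          rw [Complex.exp_add, Complex.exp_add, Complex.exp_pi_mul_I, hEdef]
          ring
        rw [h1, hωc m]
        congr 1
        rw [hθ 0, if_neg hodd]
        push_cast
        rw [show (n : ℂ) = 2 * (m : ℂ) by linear_combination hmC]
        field_simp
        ring
      · rw [hωc m, hEdef]
        simp only []
        have h2 : ((m : ℕ) : ℂ) * (2 * (Real.pi : ℂ) * Complex.I / ((n : ℂ) + 1)) =
            (((θ 1 : ℝ) : ℂ) * Complex.I + ((θ n : ℝ) : ℂ) * Complex.I) +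
              2 * (Real.pi : ℂ) * Complex.I := by
          rw [hθ 1, hθ n, if_neg hodd, if_neg hodd]
          push_cast
          rw [show (n : ℂ) = 2 * (m : ℂ) by linear_combination hmC]
          field_simp
          linear_combination 4 * mul_inv_cancel₀ hm0
        rw [h2, Complex.exp_add, Complex.exp_two_pi_mul_I, mul_one, Complex.exp_add]
  obtain ⟨c, hEc, hE1n⟩ := key
  -- (i,j) ∈ R ℓ forces i + j = c whenever -(E ℓ)^2 = ω ^ c
  have hsum : ∀ (ℓ : ℕ), -(E ℓ) ^ 2 = ω ^ c → ∀ i j : ZMod (n + 1), (i, j) ∈ R ℓ →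
      i + j = (c : ZMod (n + 1)) := by
    intro ℓ hℓ i j hij
    apply hinj
    rw [← hval, hfwd ℓ i j hij, hℓ, hcst]
  -- the two orders cannot both be in R 0
  have hop : ∀ i j : ZMod (n + 1), (i, j) ∈ R 0 → (j, i) ∈ R 0 → False := by
    intro i j h1 h2
    obtain ⟨-, r, hr, e1⟩ := (hR' 0 i j).mp h1
    obtain ⟨-, s, hs, e2⟩ := (hR' 0 j i).mp h2
    have hz : ((r : ℂ) + s) * E 0 = 0 := by linear_combination -e1 - e2
    rcases mul_eq_zero.mp hz with h | h
    · have : r + s = 0 := by exact_mod_cast h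
      linarith
    · exact hE0 0 h
  constructor
  · rintro ⟨i, j⟩ ⟨i2, j2⟩ hp hq hpq
    have h1 := hsum 0 hEc i j hp
    have h2 := hsum 0 hEc i2 j2 hq
    have hne1 : i ≠ j := ((hR' 0 i j).mp hp).1
    have hS : i + j = i2 + j2 := h1.trans h2.symm
    refine ⟨?_, ?_, ?_, ?_⟩ <;> intro h <;> simp only at h
    · apply hpq
      have hj : j = j2 := by rw [h] at hS; exact add_left_cancel hS
      rw [h, hj]
    · apply hop i j hp
      have hj : j = i2 := by linear_combination hS - h
      have hi : i = j2 := h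
      rw [← hj, ← hi] at hq
      exact hq
    · apply hop i j hp
      have hi : i = j2 := by linear_combination hS - h
      have hj : j = i2 := h
      rw [← hj, ← hi] at hq
      exact hq
    · apply hpq
      have hi : i = i2 := by rw [h] at hS; exact add_right_cancel hS
      rw [h, hi]
  · intro p hp1 hp2
    have hpx : ∀ x : ZMod (n + 1), p x = (c : ZMod (n + 1)) - x := by
      intro x
      by_cases hx : (c : ZMod (n + 1)) - x = x
      · rw [hx]
        apply hp2
        intro i j hij
        have hsij := hsum 0 hEc i j hij
        have hneij : i ≠ j := ((hR' 0 i j).mp hij).1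
        refine ⟨fun h => hneij ?_, fun h => hneij ?_⟩
        · subst h
          linear_combination -hsij - hx
        · subst h
          linear_combination hsij + hx
      · have hxy : x ≠ (c : ZMod (n + 1)) - x := fun h => hx h.symm
        have hprod : ω ^ x.val * ω ^ ((c : ZMod (n + 1)) - x).val = -(E 0) ^ 2 := by
          rw [hval, show x + ((c : ZMod (n + 1)) - x) = (c : ZMod (n + 1)) by ring, hcst, hEc]
        rcases hbwd x _ hxy hprod with h | h
        · exact (hp1 x _ h).1
        · exact (hp1 _ x h).2
    have hmap : ∀ (ℓ ℓ' : ℕ), E ℓ * E ℓ' = ω ^ c → ∀ u v : ZMod (n + 1), (u, v) ∈ R ℓ →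
        ((c : ZMod (n + 1)) - u, (c : ZMod (n + 1)) - v) ∈ R ℓ' := by
      intro ℓ ℓ' hid u v huv
      have hprod := hfwd ℓ u v huv
      obtain ⟨hne, r, hr, heq⟩ := (hR' ℓ u v).mp huv
      have hau : ω ^ ((c : ZMod (n + 1)) - u).val * ω ^ u.val = E ℓ * E ℓ' := by
        rw [hval, show ((c : ZMod (n + 1)) - u) + u = (c : ZMod (n + 1)) by ring, hcst, hid]
      have hbv : ω ^ ((c : ZMod (n + 1)) - v).val * ω ^ v.val = E ℓ * E ℓ' := by
        rw [hval, show ((c : ZMod (n + 1)) - v) + v = (c : ZMod (n + 1)) by ring, hcst, hid]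
      refine (hR' ℓ' _ _).mpr ⟨?_, r, hr, ?_⟩
      · intro h
        apply hne
        have : u = (c : ZMod (n + 1)) - ((c : ZMod (n + 1)) - u) := by ring
        rw [this, h]
        ring
      · have hab0 : ω ^ u.val * ω ^ v.val ≠ 0 :=
          mul_ne_zero (pow_ne_zero _ hω0) (pow_ne_zero _ hω0)
        have hkey : (ω ^ ((c : ZMod (n + 1)) - v).val - ω ^ ((c : ZMod (n + 1)) - u).val
            - (r : ℂ) * E ℓ') * (ω ^ u.val * ω ^ v.val) = 0 := by
          linear_combination (ω ^ u.val) * hbv - (ω ^ v.val) * hau +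
            (-((r : ℂ) * E ℓ')) * hprod + (-(E ℓ * E ℓ')) * heq
        rcases mul_eq_zero.mp hkey with h | h
        · linear_combination h
        · exact absurd h hab0
    ext q
    simp only [Set.mem_setOf_eq]
    constructor
    · rintro ⟨i, j, hij, rfl⟩
      rw [hpx i, hpx j]
      exact hmap n 1 (by rw [mul_comm]; exact hE1n) i j hij
    · intro hq
      obtain ⟨u, v⟩ := q
      refine ⟨(c : ZMod (n + 1)) - u, (c : ZMod (n + 1)) - v, hmap 1 n hE1n u v hq, ?_⟩
      have hcc : ∀ a : ZMod (n + 1), (c : ZMod (n + 1)) - ((c : ZMod (n + 1)) - a) = a :=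
        fun a => by ring
      rw [hpx, hpx, hcc, hcc]
end

section
/- Let n ≥ 2 and ω = exp(2πi/(n+1)). For ℓ ∈ {0,n} let θ_ℓ = −(ℓ+1)π/(n+1) if n+1 is even, and θ_ℓ = −(2ℓ+1)π/(2(n+1)) if n+1 is odd, and let R_ℓ = {(i,j) : 0 ≤ i,j ≤ n, i ≠ j, ω^j − ω^i = r·e^{iθ_ℓ} for some real r > 0}. Let p be the product of the pairwise disjoint transpositions (i j) over (i,j) ∈ R_0, and q the product of the pairwise disjoint transpositions (i j) over (i,j) ∈ R_n. Then the composition q ∘ p is the cyclic permutation of {0,…,n} sending i to i+1 mod n+1. -/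
section Aux
open Complex

lemma exp_real_mul_I (c : ℝ) : Complex.exp (↑c * I) = ↑(Real.cos c) + ↑(Real.sin c) * I := by
  rw [Complex.exp_mul_I]; push_cast; ring

lemma pos_iff (s ψ φ : ℝ) (hs : 0 < s) :
    (∃ r : ℝ, 0 < r ∧ (s:ℂ) * Complex.exp (↑ψ * I) = ↑r * Complex.exp (↑φ * I)) ↔
      ∃ k : ℤ, ψ = φ + 2 * Real.pi * k := by
  have hs0 : (s:ℂ) ≠ 0 := by exact_mod_cast hs.ne'
  constructor
  · rintro ⟨r, hr, heq⟩
    have hx : Complex.exp (↑(ψ - φ) * I) = ↑(r / s) := by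
      push_cast
      rw [sub_mul, Complex.exp_sub, div_eq_div_iff (Complex.exp_ne_zero _) hs0]
      linear_combination heq
    have habs : ‖Complex.exp (↑(ψ - φ) * I)‖ = 1 :=
      Complex.norm_exp_ofReal_mul_I _
    rw [hx] at habs
    have : |r / s| = 1 := by rwa [Complex.norm_real, Real.norm_eq_abs] at habs
    have hrs : r / s = 1 := by
      rcases abs_eq (by norm_num : (0:ℝ) ≤ 1) |>.mp this with h | h
      · exact h
      · nlinarith [div_pos hr hs]
    rw [hrs, Complex.ofReal_one] at hx
    obtain ⟨k, hk⟩ := Complex.exp_eq_one_iff.mp hx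
    refine ⟨k, ?_⟩
    have h2 : (↑(ψ - φ) : ℂ) * I = (↑(2 * Real.pi * k) : ℂ) * I := by
      rw [hk]; push_cast; ring
    have := Complex.ofReal_inj.mp (mul_right_cancel₀ Complex.I_ne_zero h2)
    linarith
  · rintro ⟨k, hk⟩
    refine ⟨s, hs, ?_⟩
    rw [hk]
    push_cast
    rw [show (↑φ + 2 * ↑Real.pi * ↑k) * I = ↑φ * I + (k:ℂ) * (2 * ↑Real.pi * I) by ring,
      Complex.exp_add, Complex.exp_int_mul_two_pi_mul_I]
    ring



lemma diff_eq (m : ℕ) (hm : 0 < m) (ω : ℂ) (hω : ω = Complex.exp (2 * ↑Real.pi * I / m))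
    (a b : ℕ) :
    ω ^ b - ω ^ a = ↑(2 * Real.sin (Real.pi * ((b:ℝ) - a) / m)) *
      Complex.exp (↑(Real.pi * ((a:ℝ) + b) / m + Real.pi / 2) * I) := by
  have hm0 : (m:ℝ) ≠ 0 := Nat.cast_ne_zero.mpr hm.ne'
  have hpow : ∀ c : ℕ, ω ^ c = Complex.exp (↑(2 * Real.pi * (c:ℝ) / m) * I) := by
    intro c
    rw [hω, ← Complex.exp_nat_mul]
    congr 1
    push_cast
    field_simp
  rw [hpow, hpow, Complex.exp_mul_I, Complex.exp_mul_I, Complex.exp_mul_I]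
  set x := Real.pi * (a:ℝ) / m with hx
  set y := Real.pi * (b:ℝ) / m with hy
  have e1 : 2 * Real.pi * (b:ℝ) / m = y + y := by rw [hy]; ring
  have e2 : 2 * Real.pi * (a:ℝ) / m = x + x := by rw [hx]; ring
  have e3 : Real.pi * ((b:ℝ) - a) / m = y - x := by rw [hx, hy]; ring
  have e4 : Real.pi * ((a:ℝ) + b) / m = x + y := by rw [hx, hy]; ring
  rw [e1, e2, e3, e4]
  have A1 : Real.cos (y+y) - Real.cos (x+x) =
      2 * Real.sin (y-x) * Real.cos (x+y+Real.pi/2) := by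
    simp only [Real.sin_add, Real.cos_add, Real.sin_sub, Real.cos_sub,
      Real.cos_pi_div_two, Real.sin_pi_div_two]
    linear_combination (2*Real.sin y^2 - 1) * Real.sin_sq_add_cos_sq x +
      (1 - 2*Real.sin x^2) * Real.sin_sq_add_cos_sq y
  have A2 : Real.sin (y+y) - Real.sin (x+x) =
      2 * Real.sin (y-x) * Real.sin (x+y+Real.pi/2) := by
    simp only [Real.sin_add, Real.cos_add, Real.sin_sub, Real.cos_sub,
      Real.cos_pi_div_two, Real.sin_pi_div_two]
    linear_combination (-2*Real.sin y*Real.cos y) * Real.sin_sq_add_cos_sq x +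
      (2*Real.sin x*Real.cos x) * Real.sin_sq_add_cos_sq y
  have B1 : (↑(Real.cos (y+y)) : ℂ) - ↑(Real.cos (x+x)) =
      2 * ↑(Real.sin (y-x)) * ↑(Real.cos (x+y+Real.pi/2)) := by exact_mod_cast A1
  have B2 : (↑(Real.sin (y+y)) : ℂ) - ↑(Real.sin (x+x)) =
      2 * ↑(Real.sin (y-x)) * ↑(Real.sin (x+y+Real.pi/2)) := by exact_mod_cast A2
  push_cast at B1 B2 ⊢
  linear_combination B1 + B2 * Complex.I


lemma neg_flip (s ψ : ℝ) : (↑s : ℂ) * Complex.exp (↑ψ*I) = ↑(-s) * Complex.exp (↑(ψ+Real.pi)*I) := by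
  push_cast
  rw [add_mul, Complex.exp_add, Complex.exp_pi_mul_I]
  ring

lemma real_int_iff (c : ℝ) (hc : c ≠ 0) (A B : ℤ) :
    ((A:ℝ) * c = (B:ℝ) * c) ↔ A = B := by
  constructor
  · intro h
    exact_mod_cast mul_right_cancel₀ hc h
  · intro h; rw [h]

lemma sin_pos_aux (M d : ℝ) (hM : 0 < M) (h0 : 0 < d) (h1 : d < M) :
    0 < Real.sin (Real.pi * d / M) := by
  apply Real.sin_pos_of_pos_of_lt_pi
  · positivity
  · rw [div_lt_iff₀ hM]
    nlinarith [Real.pi_pos]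

lemma char (n : ℕ) (hn : 2 ≤ n)
    (ω : ℂ) (hω : ω = Complex.exp (2 * Real.pi * Complex.I / (n + 1)))
    (θ : ℕ → ℝ)
    (hθ : ∀ ℓ, θ ℓ = if Even (n + 1) then -(((ℓ : ℝ) + 1) * Real.pi) / (n + 1)
      else -((2 * (ℓ : ℝ) + 1) * Real.pi) / (2 * (n + 1)))
    (R : ℕ → Set (ZMod (n + 1) × ZMod (n + 1)))
    (hR : ∀ ℓ, R ℓ = {p | p.1 ≠ p.2 ∧ ∃ r : ℝ, 0 < r ∧
      ω ^ (p.2).val - ω ^ (p.1).val = (r : ℂ) * Complex.exp ((θ ℓ : ℂ) * Complex.I)})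
    (ℓ : ℕ) (i j : ZMod (n + 1)) (hij : i ≠ j) :
    (i, j) ∈ R ℓ ↔ ∃ k : ℤ,
      2*((i.val : ℤ) + (j.val : ℤ)) + ((n:ℤ)+1) * (if i.val < j.val then 1 else 3)
        = (if Even (n + 1) then -2*((ℓ:ℤ)+1) else -(2*(ℓ:ℤ)+1)) + 4*((n:ℤ)+1)*k := by
  have hm : 0 < n + 1 := Nat.succ_pos n
  have hM : (0:ℝ) < ((n+1 : ℕ) : ℝ) := by positivity
  have ha : i.val < n + 1 := ZMod.val_lt i
  have hb : j.val < n + 1 := ZMod.val_lt j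
  have hab : i.val ≠ j.val := fun h => hij (ZMod.val_injective _ h)
  have hω' : ω = Complex.exp (2 * ↑Real.pi * Complex.I / ((n+1 : ℕ) : ℂ)) := by
    rw [hω]; push_cast; ring_nf
  have hc : Real.pi / (2*(((n+1:ℕ)):ℝ)) ≠ 0 := by positivity
  have w2 : ∀ k : ℤ, θ ℓ + 2 * Real.pi * k =
      (((if Even (n + 1) then -2*((ℓ:ℤ)+1) else -(2*(ℓ:ℤ)+1)) + 4*((n:ℤ)+1)*k : ℤ) : ℝ)
        * (Real.pi/(2*(((n+1:ℕ)):ℝ))) := by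
    intro k
    rw [hθ]
    have hn0 : ((n:ℝ) + 1) ≠ 0 := by positivity
    split_ifs with hpar
    · push_cast
      field_simp
      ring
    · push_cast
      field_simp
      ring
  have hmem : (i, j) ∈ R ℓ ↔ ∃ r : ℝ, 0 < r ∧
      ω ^ j.val - ω ^ i.val = (r : ℂ) * Complex.exp ((θ ℓ : ℂ) * Complex.I) := by
    rw [hR]
    simp only [Set.mem_setOf_eq]
    exact and_iff_right hij
  rw [hmem, diff_eq (n+1) hm ω hω' i.val j.val]
  rcases lt_or_gt_of_ne hab with hlt | hlt
  · -- i.val < j.val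
    have hd : (0:ℝ) < (j.val:ℝ) - i.val := by
      have := (Nat.cast_lt (α := ℝ)).mpr hlt
      linarith
    have hd2 : ((j.val:ℝ) - i.val) < ((n+1:ℕ):ℝ) := by
      have := (Nat.cast_lt (α := ℝ)).mpr hb
      have h0 : (0:ℝ) ≤ (i.val:ℝ) := Nat.cast_nonneg _
      linarith
    have hsin := sin_pos_aux _ _ hM hd hd2
    rw [pos_iff _ _ _ (by linarith : (0:ℝ) < 2 * Real.sin (Real.pi * ((j.val:ℝ) - i.val) / ((n+1:ℕ):ℝ)))]
    refine exists_congr fun k => ?_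
    rw [w2 k]
    have w1 : Real.pi*((i.val:ℝ)+j.val)/((n+1:ℕ):ℝ) + Real.pi/2 =
        ((2*((i.val:ℤ)+(j.val:ℤ)) + ((n:ℤ)+1) * 1 : ℤ):ℝ) * (Real.pi/(2*(((n+1:ℕ)):ℝ))) := by
      have hn0 : ((n:ℝ) + 1) ≠ 0 := by positivity
      push_cast
      field_simp
    rw [w1, real_int_iff _ hc, if_pos hlt]
  · -- j.val < i.val
    have hd : (0:ℝ) < (i.val:ℝ) - j.val := by
      have := (Nat.cast_lt (α := ℝ)).mpr hlt
      linarith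
    have hd2 : ((i.val:ℝ) - j.val) < ((n+1:ℕ):ℝ) := by
      have := (Nat.cast_lt (α := ℝ)).mpr ha
      have h0 : (0:ℝ) ≤ (j.val:ℝ) := Nat.cast_nonneg _
      linarith
    have hsin := sin_pos_aux _ _ hM hd hd2
    have hneg : Real.sin (Real.pi * ((j.val:ℝ) - i.val) / ((n+1:ℕ):ℝ)) =
        - Real.sin (Real.pi * ((i.val:ℝ) - j.val) / ((n+1:ℕ):ℝ)) := by
      rw [show Real.pi * ((j.val:ℝ) - i.val) / ((n+1:ℕ):ℝ) =
        -(Real.pi * ((i.val:ℝ) - j.val) / ((n+1:ℕ):ℝ)) by ring, Real.sin_neg]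
    rw [neg_flip]
    rw [pos_iff _ _ _ (by rw [hneg]; linarith :
      (0:ℝ) < -(2 * Real.sin (Real.pi * ((j.val:ℝ) - i.val) / ((n+1:ℕ):ℝ))))]
    refine exists_congr fun k => ?_
    rw [w2 k]
    have w1 : (Real.pi*((i.val:ℝ)+j.val)/((n+1:ℕ):ℝ) + Real.pi/2) + Real.pi =
        ((2*((i.val:ℤ)+(j.val:ℤ)) + ((n:ℤ)+1) * 3 : ℤ):ℝ) * (Real.pi/(2*(((n+1:ℕ)):ℝ))) := by
      have hn0 : ((n:ℝ) + 1) ≠ 0 := by positivity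
      push_cast
      field_simp
      ring
    rw [w1, real_int_iff _ hc, if_neg (by omega : ¬ i.val < j.val)]


lemma sum_eq (n : ℕ) (hn : 2 ≤ n)
    (ω : ℂ) (hω : ω = Complex.exp (2 * Real.pi * Complex.I / (n + 1)))
    (θ : ℕ → ℝ)
    (hθ : ∀ ℓ, θ ℓ = if Even (n + 1) then -(((ℓ : ℝ) + 1) * Real.pi) / (n + 1)
      else -((2 * (ℓ : ℝ) + 1) * Real.pi) / (2 * (n + 1)))
    (R : ℕ → Set (ZMod (n + 1) × ZMod (n + 1)))
    (hR : ∀ ℓ, R ℓ = {p | p.1 ≠ p.2 ∧ ∃ r : ℝ, 0 < r ∧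
      ω ^ (p.2).val - ω ^ (p.1).val = (r : ℂ) * Complex.exp ((θ ℓ : ℂ) * Complex.I)})
    (ℓ : ℕ) (i j : ZMod (n + 1)) (hmem : (i, j) ∈ R ℓ) :
    i + j = -((((n+1)/2 : ℕ)) : ZMod (n+1)) - (ℓ : ZMod (n+1)) - 1 := by
  have hij : i ≠ j := by
    have := hmem
    rw [hR] at this
    exact this.1
  obtain ⟨k, heq⟩ := (char n hn ω hω θ hθ R hR ℓ i j hij).mp hmem
  set t : ℕ := (n+1)/2 with htdef
  obtain ⟨K, hK⟩ : ∃ K : ℤ, ((n:ℤ)+1)*k = K := ⟨_, rfl⟩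
  have heq2 : 2*((i.val:ℤ) + (j.val:ℤ)) + ((n:ℤ)+1) * (if i.val < j.val then 1 else 3)
      = (if Even (n + 1) then -2*((ℓ:ℤ)+1) else -(2*(ℓ:ℤ)+1)) + 4*K := by
    rw [← hK]; linear_combination heq
  clear heq
  have key : ((i.val:ℤ) + (j.val:ℤ) = -(t:ℤ) - (ℓ:ℤ) - 1 + 2*K) ∨
      ((i.val:ℤ) + (j.val:ℤ) = -(t:ℤ) - (ℓ:ℤ) - 1 + 2*K - ((n:ℤ)+1)) := by
    rcases Nat.even_or_odd (n+1) with hpar | hpar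
    · have hteq : (n:ℤ) + 1 = 2*(t:ℤ) := by
        obtain ⟨c, hc⟩ := hpar
        have : n + 1 = 2*t := by omega
        exact_mod_cast this
      rw [if_pos hpar] at heq2
      by_cases hab : i.val < j.val
      · rw [if_pos hab] at heq2; omega
      · rw [if_neg hab] at heq2; omega
    · have hteq : (n:ℤ) + 1 = 2*(t:ℤ) + 1 := by
        obtain ⟨c, hc⟩ := hpar
        have : n + 1 = 2*t + 1 := by omega
        exact_mod_cast this
      rw [if_neg ((Nat.not_even_iff_odd.mpr hpar : ¬ Even (n+1)))] at heq2
      by_cases hab : i.val < j.val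
      · rw [if_pos hab] at heq2; omega
      · rw [if_neg hab] at heq2; omega
  have hz : ((n : ZMod (n+1))) + 1 = 0 := by exact_mod_cast ZMod.natCast_self (n+1)
  have hK0 : ((K:ℤ) : ZMod (n+1)) = 0 := by
    rw [← hK]; push_cast; linear_combination (k : ZMod (n+1)) * hz
  rcases key with key | key <;>
  · have h2 := congrArg (Int.cast : ℤ → ZMod (n+1)) key
    push_cast at h2
    rw [ZMod.natCast_val, ZMod.natCast_val, ZMod.cast_id, ZMod.cast_id] at h2
    rw [h2]
    first
    | linear_combination (2 : ZMod (n+1)) * hK0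
    | linear_combination (2 : ZMod (n+1)) * hK0 - hz


lemma exists_mem (n : ℕ) (hn : 2 ≤ n)
    (ω : ℂ) (hω : ω = Complex.exp (2 * Real.pi * Complex.I / (n + 1)))
    (θ : ℕ → ℝ)
    (hθ : ∀ ℓ, θ ℓ = if Even (n + 1) then -(((ℓ : ℝ) + 1) * Real.pi) / (n + 1)
      else -((2 * (ℓ : ℝ) + 1) * Real.pi) / (2 * (n + 1)))
    (R : ℕ → Set (ZMod (n + 1) × ZMod (n + 1)))
    (hR : ∀ ℓ, R ℓ = {p | p.1 ≠ p.2 ∧ ∃ r : ℝ, 0 < r ∧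
      ω ^ (p.2).val - ω ^ (p.1).val = (r : ℂ) * Complex.exp ((θ ℓ : ℂ) * Complex.I)})
    (ℓ : ℕ) (hℓ : ℓ = 0 ∨ ℓ = n) (x : ZMod (n+1))
    (hx : x ≠ -((((n+1)/2 : ℕ)) : ZMod (n+1)) - (ℓ : ZMod (n+1)) - 1 - x) :
    (x, -((((n+1)/2 : ℕ)) : ZMod (n+1)) - (ℓ : ZMod (n+1)) - 1 - x) ∈ R ℓ ∨
      (-((((n+1)/2 : ℕ)) : ZMod (n+1)) - (ℓ : ZMod (n+1)) - 1 - x, x) ∈ R ℓ := by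
  set t : ℕ := (n+1)/2 with htdef
  set y : ZMod (n+1) := -(t : ZMod (n+1)) - (ℓ : ZMod (n+1)) - 1 - x with hydef
  have hij : x ≠ y := hx
  have hab : x.val ≠ y.val := fun h => hij (ZMod.val_injective _ h)
  have ha : x.val < n + 1 := ZMod.val_lt x
  have hb : y.val < n + 1 := ZMod.val_lt y
  have hz : ((n : ZMod (n+1))) + 1 = 0 := by exact_mod_cast ZMod.natCast_self (n+1)
  have hvx : ((x.val : ℕ) : ZMod (n+1)) = x := by
    rw [ZMod.natCast_val, ZMod.cast_id]
  have hvy : ((y.val : ℕ) : ZMod (n+1)) = y := by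
    rw [ZMod.natCast_val, ZMod.cast_id]
  -- the natural number congruence class of the sum
  have hparity := Nat.even_or_odd (n+1)
  -- define cnat
  obtain ⟨cnat, hcnat, hclt, hP⟩ : ∃ c : ℕ, ((c : ZMod (n+1)) = -(t : ZMod (n+1)) - (ℓ : ZMod (n+1)) - 1) ∧ c < n+1 ∧
      (∀ S : ℕ, (S = c ∨ S = (n+1) + c) → ∃ e k : ℤ, (e = 1 ∨ e = 3) ∧
        2*(S:ℤ) + ((n:ℤ)+1)*e = (if Even (n + 1) then -2*((ℓ:ℤ)+1) else -(2*(ℓ:ℤ)+1)) + 4*((n:ℤ)+1)*k) := by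
    rcases hparity with hpar | hpar
    · have hteq : n + 1 = 2*t := by obtain ⟨c, hc⟩ := hpar; omega
      have ht2 : 2 ≤ t := by omega
      have hpar' : Even (n+1) := hpar
      rcases hℓ with h | h <;> rw [h]
      · refine ⟨t - 1, ?_, by omega, ?_⟩
        · have h1 : ((t - 1) + t + 0 + 1 : ℕ) = n + 1 := by omega
          have h2 := congrArg (Nat.cast : ℕ → ZMod (n+1)) h1
          push_cast at h2 ⊢
          linear_combination h2 + hz
        · rintro S (rfl | rfl)
          · exact ⟨3, 1, by norm_num, by rw [if_pos hpar']; push_cast; omega⟩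
          · exact ⟨1, 1, by norm_num, by rw [if_pos hpar']; push_cast; omega⟩
      · refine ⟨t, ?_, by omega, ?_⟩
        · have h1 : ((t + t : ℕ) + (n + 1) : ℕ) = (n+1) + (n+1) := by omega
          have h2 := congrArg (Nat.cast : ℕ → ZMod (n+1)) h1
          push_cast at h2 ⊢
          linear_combination h2 + 2*hz
        · rintro S (rfl | rfl)
          · exact ⟨1, 1, by norm_num, by rw [if_pos hpar']; push_cast; omega⟩
          · exact ⟨3, 2, by norm_num, by rw [if_pos hpar']; push_cast; omega⟩
    · have hteq : n + 1 = 2*t + 1 := by obtain ⟨c, hc⟩ := hpar; omega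
      have ht1 : 1 ≤ t := by omega
      have hpar' : ¬ Even (n+1) := Nat.not_even_iff_odd.mpr hpar
      rcases hℓ with h | h <;> rw [h]
      · refine ⟨t, ?_, by omega, ?_⟩
        · have h1 : ((t + t + 0 + 1 : ℕ) : ℕ) = n + 1 := by omega
          have h2 := congrArg (Nat.cast : ℕ → ZMod (n+1)) h1
          push_cast at h2 ⊢
          linear_combination h2 + hz
        · rintro S (rfl | rfl)
          · exact ⟨3, 1, by norm_num, by rw [if_neg hpar']; push_cast; omega⟩
          · exact ⟨1, 1, by norm_num, by rw [if_neg hpar']; push_cast; omega⟩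
      · refine ⟨t + 1, ?_, by omega, ?_⟩
        · have h1 : (((t+1) + t : ℕ) + (n + 1) : ℕ) = (n+1) + (n+1) := by omega
          have h2 := congrArg (Nat.cast : ℕ → ZMod (n+1)) h1
          push_cast at h2 ⊢
          linear_combination h2 + 2*hz
        · rintro S (rfl | rfl)
          · exact ⟨1, 1, by norm_num, by rw [if_neg hpar']; push_cast; omega⟩
          · exact ⟨3, 2, by norm_num, by rw [if_neg hpar']; push_cast; omega⟩
  -- sum of vals is congruent to cnat
  have hsummod : (x.val + y.val) % (n+1) = cnat % (n+1) := by
    have hsum : ((x.val + y.val : ℕ) : ZMod (n+1)) = ((cnat : ℕ) : ZMod (n+1)) := by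
      push_cast
      rw [hvx, hvy, hcnat, hydef]
      ring
    exact (ZMod.natCast_eq_natCast_iff' _ _ _).mp hsum
  have hS : x.val + y.val = cnat ∨ x.val + y.val = (n+1) + cnat := by
    rcases Nat.lt_or_ge (x.val + y.val) (n+1) with h | h
    · left
      rw [Nat.mod_eq_of_lt h, Nat.mod_eq_of_lt hclt] at hsummod
      exact hsummod
    · right
      rw [Nat.mod_eq_sub_mod h, Nat.mod_eq_of_lt (by omega), Nat.mod_eq_of_lt hclt] at hsummod
      omega
  obtain ⟨e, k, he, heq⟩ := hP _ hS
  push_cast at heq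
  rcases lt_or_gt_of_ne hab with hord | hord <;> rcases he with rfl | rfl
  · left
    rw [char n hn ω hω θ hθ R hR ℓ x y hij]
    exact ⟨k, by rw [if_pos hord]; linear_combination heq⟩
  · right
    rw [char n hn ω hω θ hθ R hR ℓ y x (Ne.symm hij)]
    exact ⟨k, by rw [if_neg (by omega : ¬ y.val < x.val)]; linear_combination heq⟩
  · right
    rw [char n hn ω hω θ hθ R hR ℓ y x (Ne.symm hij)]
    exact ⟨k, by rw [if_pos hord]; linear_combination heq⟩
  · left
    rw [char n hn ω hω θ hθ R hR ℓ x y hij]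
    exact ⟨k, by rw [if_neg (by omega : ¬ x.val < y.val)]; linear_combination heq⟩



end Aux

open Matrix

/-- the product `q ∘ p` of the permutations given by the disjoint
transpositions of `R n` and `R 0` is the cyclic permutation `i ↦ i + 1` of `ℤ/(n+1)`. -/
theorem stmt_10 (n : ℕ) (hn : 2 ≤ n)
    (ω : ℂ) (hω : ω = Complex.exp (2 * Real.pi * Complex.I / (n + 1)))
    (θ : ℕ → ℝ)
    (hθ : ∀ ℓ, θ ℓ = if Even (n + 1) then -(((ℓ : ℝ) + 1) * Real.pi) / (n + 1)
      else -((2 * (ℓ : ℝ) + 1) * Real.pi) / (2 * (n + 1)))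
    (R : ℕ → Set (ZMod (n + 1) × ZMod (n + 1)))
    (hR : ∀ ℓ, R ℓ = {p | p.1 ≠ p.2 ∧ ∃ r : ℝ, 0 < r ∧
      ω ^ (p.2).val - ω ^ (p.1).val = (r : ℂ) * Complex.exp ((θ ℓ : ℂ) * Complex.I)}) :
    (∀ p q, p ∈ R 0 → q ∈ R 0 → p ≠ q →
      p.1 ≠ q.1 ∧ p.1 ≠ q.2 ∧ p.2 ≠ q.1 ∧ p.2 ≠ q.2) ∧
    (∀ p q, p ∈ R n → q ∈ R n → p ≠ q →
      p.1 ≠ q.1 ∧ p.1 ≠ q.2 ∧ p.2 ≠ q.1 ∧ p.2 ≠ q.2) ∧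
    ∀ p q : Equiv.Perm (ZMod (n + 1)),
      (∀ i j : ZMod (n + 1), (i, j) ∈ R 0 → p i = j ∧ p j = i) →
      (∀ x : ZMod (n + 1), (∀ i j : ZMod (n + 1), (i, j) ∈ R 0 → x ≠ i ∧ x ≠ j) → p x = x) →
      (∀ i j : ZMod (n + 1), (i, j) ∈ R n → q i = j ∧ q j = i) →
      (∀ x : ZMod (n + 1), (∀ i j : ZMod (n + 1), (i, j) ∈ R n → x ≠ i ∧ x ≠ j) → q x = x) →
      ∀ x : ZMod (n + 1), q (p x) = x + 1 := by
  have hz : ((n : ZMod (n+1))) + 1 = 0 := by exact_mod_cast ZMod.natCast_self (n+1)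
  have hne : ∀ ℓ (P : ZMod (n+1) × ZMod (n+1)), P ∈ R ℓ → P.1 ≠ P.2 := by
    intro ℓ P hP
    rw [hR] at hP
    exact hP.1
  have no_both : ∀ ℓ (i j : ZMod (n+1)), (i, j) ∈ R ℓ → (j, i) ∉ R ℓ := by
    intro ℓ i j hij hji
    rw [hR] at hij hji
    obtain ⟨-, r, hr, e1⟩ := hij
    obtain ⟨-, r', hr', e2⟩ := hji
    dsimp only at e1 e2
    have h0 : ((r:ℂ) + (r':ℂ)) * Complex.exp ((θ ℓ : ℂ) * Complex.I) = 0 := by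
      linear_combination -e1 - e2
    rcases mul_eq_zero.mp h0 with h | h
    · have : r + r' = 0 := by exact_mod_cast h
      linarith
    · exact Complex.exp_ne_zero _ h
  have hsum : ∀ ℓ (i j : ZMod (n+1)), (i, j) ∈ R ℓ →
      i + j = -((((n+1)/2 : ℕ)) : ZMod (n+1)) - (ℓ : ZMod (n+1)) - 1 :=
    fun ℓ i j h => sum_eq n hn ω hω θ hθ R hR ℓ i j h
  have disj : ∀ ℓ, ∀ p q, p ∈ R ℓ → q ∈ R ℓ → p ≠ q →
      p.1 ≠ q.1 ∧ p.1 ≠ q.2 ∧ p.2 ≠ q.1 ∧ p.2 ≠ q.2 := by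
    intro ℓ p q hp hq hpq
    have Sp := hsum ℓ p.1 p.2 hp
    have Sq := hsum ℓ q.1 q.2 hq
    refine ⟨?_, ?_, ?_, ?_⟩
    · intro h
      exact hpq (Prod.ext h (by linear_combination Sp - Sq - h))
    · intro h
      have h2 : q.1 = p.2 := by linear_combination Sq - Sp + h
      have : q = (p.2, p.1) := Prod.ext h2 h.symm
      rw [this] at hq
      exact no_both ℓ p.1 p.2 hp hq
    · intro h
      have h2 : q.2 = p.1 := by linear_combination Sq - Sp + h
      have : q = (p.2, p.1) := Prod.ext h.symm h2
      rw [this] at hq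
      exact no_both ℓ p.1 p.2 hp hq
    · intro h
      exact hpq (Prod.ext (by linear_combination Sp - Sq - h) h)
  refine ⟨disj 0, disj n, ?_⟩
  intro p q hp hpfix hq hqfix x
  have key : ∀ ℓ, (ℓ = 0 ∨ ℓ = n) →
      ∀ (f : Equiv.Perm (ZMod (n+1))),
      (∀ i j : ZMod (n + 1), (i, j) ∈ R ℓ → f i = j ∧ f j = i) →
      (∀ x : ZMod (n + 1), (∀ i j : ZMod (n + 1), (i, j) ∈ R ℓ → x ≠ i ∧ x ≠ j) → f x = x) →
      ∀ z, f z = -((((n+1)/2 : ℕ)) : ZMod (n+1)) - (ℓ : ZMod (n+1)) - 1 - z := by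
    intro ℓ hℓ f hf hffix z
    by_cases hzz : z = -((((n+1)/2 : ℕ)) : ZMod (n+1)) - (ℓ : ZMod (n+1)) - 1 - z
    · rw [← hzz]
      apply hffix
      intro i j hij
      have hs := hsum ℓ i j hij
      have hne' := hne ℓ (i, j) hij
      constructor
      · intro h
        apply hne'
        show i = j
        rw [← h] at hs ⊢
        linear_combination hzz - hs
      · intro h
        apply hne'
        show i = j
        rw [← h] at hs ⊢
        linear_combination hs - hzz
    · rcases exists_mem n hn ω hω θ hθ R hR ℓ hℓ z hzz with hm | hm
      · exact (hf _ _ hm).1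
      · exact (hf _ _ hm).2
  have hpz := key 0 (Or.inl rfl) p hp hpfix x
  have hqz := key n (Or.inr rfl) q hq hqfix (p x)
  rw [hqz, hpz]
  push_cast
  linear_combination -hz
end

section
/- Let X be an n×n Hermitian complex matrix and U an n×n unitary matrix. If exp(X)·U·exp(−X) is unitary, then U·X = X·U; consequently exp(X)·U·exp(−X) = U. -/
open Matrix

attribute [local instance] Matrix.linftyOpSemiNormedRing Matrix.linftyOpNormedRing
  Matrix.linftyOpNormedAlgebra

lemma diag_comm_aux {n : ℕ} (W : Matrix (Fin n) (Fin n) ℂ) (d : Fin n → ℝ)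
    (h : W * diagonal (fun i => ((Real.exp (d i)) ^ 2 : ℂ)) =
         diagonal (fun i => ((Real.exp (d i)) ^ 2 : ℂ)) * W) :
    W * diagonal (fun i => (d i : ℂ)) = diagonal (fun i => (d i : ℂ)) * W := by
  ext i j
  have h' := congrFun (congrFun h i) j
  rw [mul_diagonal, diagonal_mul] at h' ⊢
  by_cases hw : W i j = 0
  · simp [hw]
  · have hd : d j = d i := by
      have hc : ((Real.exp (d j)) ^ 2 : ℂ) = ((Real.exp (d i)) ^ 2 : ℂ) := by
        have h'' : W i j * ((Real.exp (d j)) ^ 2 : ℂ) =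
            W i j * ((Real.exp (d i)) ^ 2 : ℂ) := by linear_combination h'
        exact mul_left_cancel₀ hw h''
      have hr : Real.exp (d j) ^ 2 = Real.exp (d i) ^ 2 := by exact_mod_cast hc
      have : Real.exp (2 * d j) = Real.exp (2 * d i) := by
        rw [two_mul, two_mul, Real.exp_add, Real.exp_add, ← sq, ← sq, hr]
      have := Real.exp_injective this
      linarith
    rw [hd, mul_comm]

lemma conj_transfer {n : ℕ} (V Vs A B : Matrix (Fin n) (Fin n) ℂ)
    (h1 : Vs * V = 1) (h : V * A * Vs * B = B * (V * A * Vs)) :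
    A * (Vs * B * V) = Vs * B * V * A := by
  calc A * (Vs * B * V)
      = Vs * (V * A * Vs * B) * V := by
        simp only [← mul_assoc]
        rw [h1, one_mul]
    _ = Vs * (B * (V * A * Vs)) * V := by rw [h]
    _ = Vs * B * V * A := by
        simp only [← mul_assoc]
        rw [mul_assoc _ Vs V, h1, mul_one]

/-- if `X` is Hermitian, `U` is unitary and `exp(X) U exp(-X)` is unitary,
then `U` commutes with `X` and hence `exp(X) U exp(-X) = U`. -/
theorem stmt_13 (n : ℕ) (X U : Matrix (Fin n) (Fin n) ℂ)
    (hX : X.IsHermitian) (hU : Uᴴ * U = 1)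
    (h : (NormedSpace.exp X * U * NormedSpace.exp (-X))ᴴ *
      (NormedSpace.exp X * U * NormedSpace.exp (-X)) = 1) :
    U * X = X * U ∧ NormedSpace.exp X * U * NormedSpace.exp (-X) = U := by
  set E := NormedSpace.exp X with hEdef
  set F := NormedSpace.exp (-X) with hFdef
  have hE : Eᴴ = E := hX.exp
  have hF : Fᴴ = F := hX.neg.exp
  have hcomm : Commute X (-X) := (Commute.refl X).neg_right
  have hEF : E * F = 1 := by
    rw [hEdef, hFdef, ← Matrix.exp_add_of_commute _ _ hcomm, add_neg_cancel,
      NormedSpace.exp_zero]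
  have hFE : F * E = 1 := by
    rw [hEdef, hFdef, ← Matrix.exp_add_of_commute _ _ hcomm.symm, neg_add_cancel,
      NormedSpace.exp_zero]
  have hUU' : U * Uᴴ = 1 := mul_eq_one_comm.mp hU
  -- From h: Uᴴ * (E * E) * U = E * E
  have h' : F * Uᴴ * E * (E * U * F) = 1 := by
    simpa [conjTranspose_mul, hE, hF, mul_assoc] using h
  have h2 : Uᴴ * (E * E) * U = E * E := by
    have key : E * (F * Uᴴ * E * (E * U * F)) * E = Uᴴ * (E * E) * U := by
      simp only [← mul_assoc]
      rw [hEF, one_mul, mul_assoc _ F E, hFE, mul_one]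
    calc Uᴴ * (E * E) * U = E * (F * Uᴴ * E * (E * U * F)) * E := key.symm
      _ = E * E := by rw [h', mul_one]
  have h3 : (E * E) * U = U * (E * E) := by
    calc (E * E) * U = (U * Uᴴ) * ((E * E) * U) := by rw [hUU', one_mul]
      _ = U * (Uᴴ * (E * E) * U) := by simp [mul_assoc]
      _ = U * (E * E) := by rw [h2]
  -- spectral theorem
  set V : Matrix (Fin n) (Fin n) ℂ := (hX.eigenvectorUnitary : Matrix (Fin n) (Fin n) ℂ) with hVdef
  have hVsV : star V * V = 1 := by
    exact (Matrix.mem_unitaryGroup_iff').mp hX.eigenvectorUnitary.2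
  have hVVs : V * star V = 1 := mul_eq_one_comm.mp hVsV
  have hVinv : V⁻¹ = star V := Matrix.inv_eq_left_inv hVsV
  have hVunit : IsUnit V := by
    exact Matrix.isUnit_iff_isUnit_det V |>.mpr
      (Matrix.isUnit_det_of_left_inverse hVsV)
  set d : Fin n → ℝ := hX.eigenvalues with hddef
  have hspec : X = V * diagonal (fun i => (d i : ℂ)) * V⁻¹ := by
    rw [hVinv]
    convert hX.spectral_theorem using 2
    exact (Unitary.conjStarAlgAut_apply _ _).symm
  have hexpD : NormedSpace.exp (diagonal (fun i => (d i : ℂ))) =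
      diagonal (fun i => ((Real.exp (d i) : ℂ))) := by
    rw [Matrix.exp_diagonal, Pi.exp_def]
    simp only [← Complex.exp_eq_exp_ℂ, ← Complex.ofReal_exp]
  have hEeq : E = V * diagonal (fun i => ((Real.exp (d i) : ℂ))) * V⁻¹ := by
    rw [hEdef, hspec, Matrix.exp_conj V _ hVunit, hexpD]
  have hEE : E * E = V * diagonal (fun i => ((Real.exp (d i)) ^ 2 : ℂ)) * V⁻¹ := by
    rw [hEeq, hVinv]
    calc V * diagonal (fun i => ((Real.exp (d i) : ℂ))) * star V *
          (V * diagonal (fun i => ((Real.exp (d i) : ℂ))) * star V)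
        = V * (diagonal (fun i => ((Real.exp (d i) : ℂ))) * (star V * V) *
            diagonal (fun i => ((Real.exp (d i) : ℂ)))) * star V := by
          simp [mul_assoc]
      _ = V * diagonal (fun i => ((Real.exp (d i)) ^ 2 : ℂ)) * star V := by
          rw [hVsV, mul_one, diagonal_mul_diagonal]
          congr 2
          funext i
          ring
  -- transfer commutation to eigenbasis
  have h3' : V * diagonal (fun i => ((Real.exp (d i)) ^ 2 : ℂ)) * star V * U =
      U * (V * diagonal (fun i => ((Real.exp (d i)) ^ 2 : ℂ)) * star V) := by
    rw [hEE, hVinv] at h3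
    exact h3
  have hWcomm := conj_transfer V (star V)
    (diagonal (fun i => ((Real.exp (d i)) ^ 2 : ℂ))) U hVsV h3'
  have hWD := diag_comm_aux (star V * U * V) d (by
    simpa only [mul_assoc] using hWcomm.symm)
  have hUX : U * X = X * U := by
    rw [hspec, hVinv]
    exact conj_transfer (star V) V U (diagonal (fun i => (d i : ℂ))) hVVs hWD
  refine ⟨hUX, ?_⟩
  have hXU : Commute X U := hUX.symm
  have hEU : Commute E U := hXU.exp_left
  calc E * U * F = U * E * F := by rw [hEU.eq]
    _ = U * (E * F) := by rw [mul_assoc]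
    _ = U := by rw [hEF, mul_one]
end

section
/- Let n+1 = 2m with m ≥ 2. Let 𝔄 = { (ϱ_0,…,ϱ_n) ∈ ℝ^{n+1} : ϱ_m ≤ ϱ_{m+1} ≤ … ≤ ϱ_{2m−1} ≤ ϱ_0 ≤ ϱ_1 ≤ … ≤ ϱ_{m−1} ≤ 2 + ϱ_m and ϱ_0 + ϱ_1 + … + ϱ_n = 0 } (a Weyl alcove of SU(n+1)), and let 𝔄^p = { ϱ ∈ 𝔄 : ϱ_i + ϱ_{n−i} = 0 for all i }. Then { (γ_0,…,γ_n) ∈ ℝ^{n+1} : γ_{i+1} − γ_i ≥ −2 for all i ∈ ℤ/(n+1) (indices mod n+1), and γ_i + γ_{n−i} = 0 for all i } = (n+1)·𝔄^p − (1, 3, …, 2m−1, 1−2m, …, −3, −1), i.e. the γ-region is the image of 𝔄^p under scaling by n+1 followed by translation by minus the vector whose j-th component is 2j+1 for 0 ≤ j ≤ m−1 and −(2(n−j)+1) for m ≤ j ≤ n. -/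
open Matrix

noncomputable def stmt15c (n m : ℕ) (j : ZMod (n+1)) : ℝ :=
  if j.val < m then 2 * (j.val : ℝ) + 1 else -(2 * ((n - j.val : ℕ) : ℝ) + 1)

lemma stmt15_val_le (n : ℕ) (i : ZMod (n+1)) : i.val ≤ n :=
  Nat.lt_succ_iff.mp (ZMod.val_lt i)

lemma stmt15_cast_val (n : ℕ) (i : ZMod (n+1)) : ((i.val : ℕ) : ZMod (n+1)) = i :=
  ZMod.natCast_rightInverse i

lemma stmt15_sub_val (n : ℕ) (i : ZMod (n+1)) :
    ((n : ZMod (n+1)) - i).val = n - i.val := by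
  have h : (n : ZMod (n+1)) - i = ((n - i.val : ℕ) : ZMod (n+1)) := by
    rw [Nat.cast_sub (stmt15_val_le n i), stmt15_cast_val]
  rw [h, ZMod.val_natCast_of_lt (Nat.lt_succ_of_le (Nat.sub_le _ _))]

lemma stmt15c_natCast (n m j : ℕ) (hj : j ≤ n) :
    stmt15c n m ((j : ℕ) : ZMod (n+1)) =
      if j < m then 2 * (j : ℝ) + 1 else -(2 * ((n - j : ℕ) : ℝ) + 1) := by
  unfold stmt15c
  rw [ZMod.val_natCast_of_lt (by omega)]

lemma stmt15c_pair (n m : ℕ) (hnm : n + 1 = 2 * m) (i : ZMod (n+1)) :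
    stmt15c n m i + stmt15c n m ((n : ZMod (n+1)) - i) = 0 := by
  have hv := stmt15_val_le n i
  unfold stmt15c
  rw [stmt15_sub_val]
  rcases lt_or_ge i.val m with h | h
  · have h1 : ¬ (n - i.val < m) := by omega
    have h2 : n - (n - i.val) = i.val := by omega
    rw [if_pos h, if_neg h1, h2]; ring
  · have h1 : n - i.val < m := by omega
    rw [if_neg (not_lt.mpr h), if_pos h1]; ring

lemma stmt15_sum_pair_zero (n : ℕ) (f : ZMod (n+1) → ℝ)
    (h : ∀ i, f i + f ((n : ZMod (n+1)) - i) = 0) : ∑ i, f i = 0 := by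
  have h2 : ∑ i, f ((n : ZMod (n+1)) - i) = ∑ i, f i :=
    Fintype.sum_equiv (Equiv.subLeft (n : ZMod (n+1))) _ _ (fun i => rfl)
  have h3 : ∑ i, (f i + f ((n : ZMod (n+1)) - i)) = 0 := by simp [h]
  rw [Finset.sum_add_distrib, h2] at h3
  linarith

lemma stmt15_cast_succ (n j : ℕ) :
    ((j : ℕ) : ZMod (n+1)) + 1 = ((j+1 : ℕ) : ZMod (n+1)) := by
  push_cast; ring

/-- for `n + 1 = 2m`, the region parametrizing the globally smooth
solutions of the tt*-Toda equations equals the image of the convex subset `𝔄^p` of the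
Weyl alcove `𝔄` of `SU(n+1)` under scaling by `n+1` followed by translation by minus
the vector `(1, 3, …, 2m-1, 1-2m, …, -3, -1)`. -/
theorem stmt_15 (n m : ℕ) (hm : 2 ≤ m) (hnm : n + 1 = 2 * m)
    (A Ap : Set (ZMod (n + 1) → ℝ))
    (hA : A = {ϱ |
      (∀ j : ℕ, m ≤ j → j + 1 ≤ 2 * m - 1 →
        ϱ ((j : ℕ) : ZMod (n + 1)) ≤ ϱ ((j + 1 : ℕ) : ZMod (n + 1))) ∧
      ϱ ((2 * m - 1 : ℕ) : ZMod (n + 1)) ≤ ϱ 0 ∧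
      (∀ j : ℕ, j + 1 ≤ m - 1 →
        ϱ ((j : ℕ) : ZMod (n + 1)) ≤ ϱ ((j + 1 : ℕ) : ZMod (n + 1))) ∧
      ϱ ((m - 1 : ℕ) : ZMod (n + 1)) ≤ 2 + ϱ ((m : ℕ) : ZMod (n + 1)) ∧
      ∑ i, ϱ i = 0})
    (hAp : Ap = {ϱ ∈ A | ∀ i, ϱ i + ϱ ((n : ZMod (n + 1)) - i) = 0}) :
    {γ : ZMod (n + 1) → ℝ | (∀ i, γ (i + 1) - γ i ≥ -2) ∧
      ∀ i, γ i + γ ((n : ZMod (n + 1)) - i) = 0} =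
    {x | ∃ ϱ ∈ Ap, x = fun j : ZMod (n + 1) => (n + 1 : ℝ) * ϱ j -
      (if j.val < m then 2 * (j.val : ℝ) + 1 else -(2 * ((n - j.val : ℕ) : ℝ) + 1))} := by
  have hNr : ((n:ℝ) + 1) = 2 * m := by exact_mod_cast hnm
  have hN : (0:ℝ) < (n:ℝ) + 1 := by positivity
  have hmn : m ≤ n := by omega
  ext γ
  simp only [Set.mem_setOf_eq]
  constructor
  · rintro ⟨hstep, hsym⟩
    refine ⟨fun j => (γ j + stmt15c n m j) / ((n:ℝ)+1), ?_, ?_⟩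
    · rw [hAp, Set.mem_setOf_eq, hA, Set.mem_setOf_eq]
      have hγsum : ∑ i, γ i = 0 := stmt15_sum_pair_zero n γ hsym
      have hcsum : ∑ i, stmt15c n m i = 0 :=
        stmt15_sum_pair_zero n _ (stmt15c_pair n m hnm)
      refine ⟨⟨?_, ?_, ?_, ?_, ?_⟩, ?_⟩
      · -- m ≤ j, j + 1 ≤ 2m-1
        intro j hjm hj1
        dsimp only
        have hg := hstep ((j:ℕ) : ZMod (n+1))
        rw [stmt15_cast_succ] at hg
        rw [div_le_div_iff₀ hN hN]
        apply mul_le_mul_of_nonneg_right _ hN.le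
        rw [stmt15c_natCast n m j (by omega), stmt15c_natCast n m (j+1) (by omega),
          if_neg (show ¬ j < m by omega), if_neg (show ¬ j + 1 < m by omega),
          (Nat.cast_sub (show j ≤ n by omega) : ((n - j : ℕ) : ℝ) = _),
          (Nat.cast_sub (show j + 1 ≤ n by omega) : ((n - (j+1) : ℕ) : ℝ) = _)]
        push_cast at hg ⊢
        linarith
      · -- ϱ (2m-1) ≤ ϱ 0
        dsimp only
        rw [show (2*m-1 : ℕ) = n from by omega,
          show (0 : ZMod (n+1)) = ((0:ℕ) : ZMod (n+1)) from (Nat.cast_zero).symm]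
        have hg := hstep ((n:ℕ) : ZMod (n+1))
        rw [stmt15_cast_succ,
          show ((n+1 : ℕ) : ZMod (n+1)) = ((0:ℕ) : ZMod (n+1)) from by
            rw [ZMod.natCast_self, Nat.cast_zero]] at hg
        rw [div_le_div_iff₀ hN hN]
        apply mul_le_mul_of_nonneg_right _ hN.le
        rw [stmt15c_natCast n m n le_rfl, stmt15c_natCast n m 0 (by omega),
          if_neg (show ¬ n < m by omega), if_pos (show 0 < m by omega), Nat.sub_self]
        push_cast at hg ⊢
        linarith
      · -- j + 1 ≤ m - 1
        intro j hj1
        dsimp only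
        have hg := hstep ((j:ℕ) : ZMod (n+1))
        rw [stmt15_cast_succ] at hg
        rw [div_le_div_iff₀ hN hN]
        apply mul_le_mul_of_nonneg_right _ hN.le
        rw [stmt15c_natCast n m j (by omega), stmt15c_natCast n m (j+1) (by omega),
          if_pos (show j < m by omega), if_pos (show j + 1 < m by omega)]
        push_cast at hg ⊢
        linarith
      · -- ϱ (m-1) ≤ 2 + ϱ m
        dsimp only
        have hg := hstep ((m-1 : ℕ) : ZMod (n+1))
        rw [stmt15_cast_succ, show m - 1 + 1 = m from by omega] at hg
        rw [stmt15c_natCast n m (m-1) (by omega), stmt15c_natCast n m m (by omega),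
          if_pos (show m - 1 < m by omega), if_neg (show ¬ m < m by omega),
          (Nat.cast_sub (show 1 ≤ m by omega) : ((m - 1 : ℕ) : ℝ) = _),
          (Nat.cast_sub hmn : ((n - m : ℕ) : ℝ) = _)]
        rw [div_le_iff₀ hN, add_mul, div_mul_cancel₀ _ (ne_of_gt hN)]
        push_cast at hg ⊢
        linarith
      · -- sum
        dsimp only
        rw [← Finset.sum_div, Finset.sum_add_distrib, hγsum, hcsum]
        norm_num
      · -- antisymmetry
        intro i
        dsimp only
        rw [← add_div,
          show γ i + stmt15c n m i + (γ ((n : ZMod (n+1)) - i) +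
            stmt15c n m ((n : ZMod (n+1)) - i)) = 0 from by
              linarith [hsym i, stmt15c_pair n m hnm i], zero_div]
    · funext j
      show γ j = ((n:ℝ)+1) * ((γ j + stmt15c n m j) / ((n:ℝ)+1)) - stmt15c n m j
      field_simp
      ring
  · rintro ⟨ϱ, hϱ, rfl⟩
    rw [hAp, Set.mem_setOf_eq, hA, Set.mem_setOf_eq] at hϱ
    obtain ⟨⟨h1, h2, h3, h4, _⟩, hanti⟩ := hϱ
    constructor
    · intro i
      obtain ⟨v, hvlt, rfl⟩ : ∃ v : ℕ, v < n + 1 ∧ ((v:ℕ) : ZMod (n+1)) = i :=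
        ⟨i.val, ZMod.val_lt i, stmt15_cast_val n i⟩
      dsimp only
      rw [stmt15_cast_succ]
      rcases Nat.lt_or_ge (v+1) m with hc1 | hc1
      · -- both < m
        rw [ZMod.val_natCast_of_lt (show v + 1 < n + 1 by omega),
          ZMod.val_natCast_of_lt (show v < n + 1 by omega),
          if_pos (show v + 1 < m by omega), if_pos (show v < m by omega)]
        have hkey := h3 v (by omega)
        push_cast at hkey ⊢
        nlinarith [mul_nonneg hN.le (sub_nonneg.mpr hkey)]
      rcases Nat.eq_or_lt_of_le hc1 with hc2 | hc2
      · -- v + 1 = m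
        rw [show v = m - 1 from by omega, show m - 1 + 1 = m from by omega]
        rw [ZMod.val_natCast_of_lt (show m < n + 1 by omega),
          ZMod.val_natCast_of_lt (show m - 1 < n + 1 by omega),
          if_neg (show ¬ m < m by omega), if_pos (show m - 1 < m by omega),
          (Nat.cast_sub hmn : ((n - m : ℕ) : ℝ) = _),
          (Nat.cast_sub (show 1 ≤ m by omega) : ((m - 1 : ℕ) : ℝ) = _)]
        have hkey := h4
        have hmul : ((n:ℝ)+1) * (-2) ≤
            ((n:ℝ)+1) * (ϱ ((m : ℕ) : ZMod (n+1)) - ϱ ((m-1 : ℕ) : ZMod (n+1))) :=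
          mul_le_mul_of_nonneg_left (by linarith) hN.le
        push_cast at hmul ⊢
        nlinarith [hmul]
      rcases Nat.lt_or_ge v n with hc3 | hc3
      · -- m ≤ v, v + 1 ≤ n
        rw [ZMod.val_natCast_of_lt (show v + 1 < n + 1 by omega),
          ZMod.val_natCast_of_lt (show v < n + 1 by omega),
          if_neg (show ¬ v + 1 < m by omega), if_neg (show ¬ v < m by omega),
          (Nat.cast_sub (show v + 1 ≤ n by omega) : ((n - (v+1) : ℕ) : ℝ) = _),
          (Nat.cast_sub (show v ≤ n by omega) : ((n - v : ℕ) : ℝ) = _)]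
        have hkey := h1 v (by omega) (by omega)
        push_cast at hkey ⊢
        nlinarith [mul_nonneg hN.le (sub_nonneg.mpr hkey)]
      · -- v = n : wrap around
        rw [show v = n from by omega]
        rw [show ((n+1 : ℕ) : ZMod (n+1)) = ((0:ℕ) : ZMod (n+1)) from by
          rw [ZMod.natCast_self, Nat.cast_zero]]
        rw [ZMod.val_natCast_of_lt (show 0 < n + 1 by omega),
          ZMod.val_natCast_of_lt (show n < n + 1 by omega),
          if_pos (show 0 < m by omega), if_neg (show ¬ n < m by omega), Nat.sub_self]
        have hkey : ϱ ((n : ℕ) : ZMod (n+1)) ≤ ϱ ((0:ℕ) : ZMod (n+1)) := by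
          have h2' := h2
          rw [show (2*m-1 : ℕ) = n from by omega] at h2'
          rwa [show ((0:ℕ) : ZMod (n+1)) = 0 from Nat.cast_zero]
        push_cast at hkey ⊢
        nlinarith [mul_nonneg hN.le (sub_nonneg.mpr hkey)]
    · intro i
      dsimp only
      have := hanti i
      have hc := stmt15c_pair n m hnm i
      unfold stmt15c at hc
      nlinarith [this, hc, hN]
end
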